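/- arXiv:1610.09472 — 5 statements merged into one kernel-verified Lean document; each statement's English description precedes it below -/
import Mathlib

section
/- Let ξ be a nondegenerate real random variable with E[ξ] = 0 satisfying Cramér's condition [C₀]. Then there exists a constant c > 0 such that for every α ∈ ℝ, the deviation function satisfies Λ(α) ≥ c · min{α², |α|}. -/
open MeasureTheory ProbabilityTheory Filter Set
open scoped ENNReal

/-- Taylor-type bound for the exponential on the nonnegative axis. -/
lemma exp_taylor_nonneg {y : ℝ} (hy : 0 ≤ y) :
    Real.exp y ≤ 1 + y + y ^ 2 / 2 * Real.exp y := by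
  have hexp : ∀ x : ℝ, Real.exp x = ∑' n : ℕ, x ^ n / (n.factorial) := by
    intro x
    rw [Real.exp_eq_exp_ℝ, NormedSpace.exp_eq_tsum_div]
  have hs : Summable (fun n : ℕ => y ^ n / (n.factorial)) := Real.summable_pow_div_factorial y
  have hs2 : Summable (fun n : ℕ => y ^ (n + 2) / ((n+2).factorial)) :=
    (summable_nat_add_iff 2).2 hs
  have hterm : ∀ n : ℕ, y ^ (n + 2) / (((n+2).factorial) : ℝ) ≤ y ^ 2 / 2 * (y ^ n / (n.factorial)) := by
    intro n
    have hfac : (2 : ℝ) * (n.factorial) ≤ (((n+2).factorial) : ℝ) := by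
      have h : 2 * (n.factorial) ≤ ((n+2).factorial) := by
        rw [Nat.factorial_succ, Nat.factorial_succ, ← mul_assoc]
        exact Nat.mul_le_mul_right _ (by nlinarith)
      exact_mod_cast h
    have hn : ((n.factorial) : ℝ) ≠ 0 := by positivity
    calc y ^ (n + 2) / (((n+2).factorial) : ℝ) ≤ y ^ (n + 2) / (2 * (n.factorial)) := by
          gcongr
      _ = y ^ 2 / 2 * (y ^ n / (n.factorial)) := by
          rw [pow_add]
          field_simp
  have htail : ∑' n : ℕ, y ^ (n + 2) / (((n+2).factorial) : ℝ) ≤ y ^ 2 / 2 * Real.exp y := by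
    have h := Summable.tsum_le_tsum hterm hs2 (hs.mul_left (y ^ 2 / 2))
    rwa [tsum_mul_left, ← hexp y] at h
  have hsplit := Summable.sum_add_tsum_nat_add (f := fun n : ℕ => y ^ n / ((n.factorial) : ℝ)) 2 hs
  have hsum2 : ∑ i ∈ Finset.range 2, y ^ i / ((i.factorial) : ℝ) = 1 + y := by
    simp [Finset.sum_range_succ]
  calc Real.exp y = 1 + y + ∑' n : ℕ, y ^ (n + 2) / (((n+2).factorial) : ℝ) := by
        rw [hexp y, ← hsplit, hsum2]
    _ ≤ 1 + y + y ^ 2 / 2 * Real.exp y := by linarith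

/-- Taylor-type bound for the exponential: `e^y ≤ 1 + y + (y²/2) e^{|y|}`. -/
lemma exp_taylor (y : ℝ) : Real.exp y ≤ 1 + y + y ^ 2 / 2 * Real.exp |y| := by
  rcases le_or_gt 0 y with hy | hy
  · rw [abs_of_nonneg hy]; exact exp_taylor_nonneg hy
  · have h1 : 1 + -y + (-y) ^ 2 / 2 ≤ Real.exp (-y) :=
      Real.quadratic_le_exp_of_nonneg (by linarith)
    have h1' : 1 - y + y ^ 2 / 2 ≤ Real.exp (-y) := by nlinarith [h1]
    have hme : Real.exp y * Real.exp (-y) = 1 := by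
      rw [← Real.exp_add]; simp
    have hA : (0:ℝ) < 1 - y + y ^ 2 / 2 := by nlinarith [sq_nonneg y]
    have hB : (0:ℝ) < 1 + y + y ^ 2 / 2 := by nlinarith [sq_nonneg (y + 1)]
    have h2 : Real.exp y * (1 - y + y ^ 2 / 2) ≤ 1 := by
      calc Real.exp y * (1 - y + y ^ 2 / 2) ≤ Real.exp y * Real.exp (-y) :=
            mul_le_mul_of_nonneg_left h1' (Real.exp_pos y).le
        _ = 1 := hme
    have h4 : (0:ℝ) ≤ Real.exp y * y ^ 4 := by positivity
    have hgoal : Real.exp y ≤ 1 + y + y ^ 2 / 2 := by nlinarith [h2, hB, h4]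
    have hexpabs : (1:ℝ) ≤ Real.exp |y| := Real.one_le_exp (abs_nonneg y)
    nlinarith [sq_nonneg y]

/-- The deviation (Cramér / Legendre) function of a real random variable `ξ`:
`Λ(α) = sup { λ·α − log E[e^{λξ}] : λ ∈ ℝ, E[e^{λξ}] < ∞ }`, as a value in `[0, ∞]`. -/
noncomputable def devFn {Ω : Type*} [MeasurableSpace Ω] (μ : Measure Ω) (ξ : Ω → ℝ)
    (α : ℝ) : ℝ≥0∞ :=
  ⨆ (l : ℝ) (_ : Integrable (fun ω => Real.exp (l * ξ ω)) μ),
    ENNReal.ofReal (l * α - Real.log (∫ ω, Real.exp (l * ξ ω) ∂μ))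

/-- if `ξ` is nondegenerate, centered and satisfies Cramér's condition `[C₀]`,
then there is `c > 0` with `Λ(α) ≥ c · min{α², |α|}` for all `α`. -/
theorem devFn_lower_bound {Ω : Type*} [MeasurableSpace Ω] (μ : Measure Ω)
    [IsProbabilityMeasure μ] (ξ : Ω → ℝ) (hmeas : Measurable ξ)
    (hnondeg : ¬ ∃ c : ℝ, ξ =ᵐ[μ] fun _ => c)
    (hC0 : ∃ δ > 0, Integrable (fun ω => Real.exp (δ * |ξ ω|)) μ)
    (hmean : ∫ ω, ξ ω ∂μ = 0) :
    ∃ c > 0, ∀ α : ℝ, ENNReal.ofReal (c * min (α ^ 2) |α|) ≤ devFn μ ξ α := by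
  obtain ⟨δ, hδ, hIδ⟩ := hC0
  set lam0 : ℝ := δ / 2 with hlam0def
  have hlam0 : 0 < lam0 := by positivity
  -- ξ is integrable
  have hξint : Integrable ξ μ := by
    refine (hIδ.const_mul (1 / δ)).mono hmeas.aestronglyMeasurable ?_
    filter_upwards with ω
    have h1 : δ * |ξ ω| ≤ Real.exp (δ * |ξ ω|) := by
      linarith [Real.add_one_le_exp (δ * |ξ ω|)]
    have h2 : (0:ℝ) < Real.exp (δ * |ξ ω|) := Real.exp_pos _
    rw [Real.norm_eq_abs, Real.norm_eq_abs]
    refine le_trans ?_ (le_abs_self _)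
    rw [div_mul_eq_mul_div, one_mul, le_div_iff₀ hδ]
    nlinarith [h1]
  -- exp(l ξ) is integrable for |l| ≤ δ
  have hexpint : ∀ l : ℝ, |l| ≤ δ → Integrable (fun ω => Real.exp (l * ξ ω)) μ := by
    intro l hl
    refine hIδ.mono ((hmeas.const_mul l).exp).aestronglyMeasurable ?_
    filter_upwards with ω
    rw [Real.norm_eq_abs, Real.norm_eq_abs, abs_of_pos (Real.exp_pos _),
      abs_of_pos (Real.exp_pos _), Real.exp_le_exp]
    calc l * ξ ω ≤ |l * ξ ω| := le_abs_self _
      _ = |l| * |ξ ω| := abs_mul _ _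
      _ ≤ δ * |ξ ω| := by
          exact mul_le_mul_of_nonneg_right hl (abs_nonneg _)
  -- the second-moment-type weight is integrable
  have hM : Integrable (fun ω => ξ ω ^ 2 * Real.exp (lam0 * |ξ ω|)) μ := by
    refine (hIδ.const_mul (4 / lam0 ^ 2)).mono
      ((hmeas.pow_const 2).mul ((hmeas.abs.const_mul lam0).exp)).aestronglyMeasurable ?_
    filter_upwards with ω
    have hx : (0:ℝ) ≤ lam0 * |ξ ω| := by positivity
    -- exp t ≥ t²/4 for t ≥ 0
    have hq : (lam0 * |ξ ω|) ^ 2 / 4 ≤ Real.exp (lam0 * |ξ ω|) := by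
      have h1 : 1 + lam0 * |ξ ω| / 2 ≤ Real.exp (lam0 * |ξ ω| / 2) := by
        linarith [Real.add_one_le_exp (lam0 * |ξ ω| / 2)]
      have h2 : Real.exp (lam0 * |ξ ω| / 2) * Real.exp (lam0 * |ξ ω| / 2)
          = Real.exp (lam0 * |ξ ω|) := by
        rw [← Real.exp_add]; ring_nf
      nlinarith [Real.exp_pos (lam0 * |ξ ω| / 2)]
    have hsq : ξ ω ^ 2 ≤ 4 / lam0 ^ 2 * Real.exp (lam0 * |ξ ω|) := by
      have habs : ξ ω ^ 2 = |ξ ω| ^ 2 := (sq_abs _).symm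
      rw [habs, div_mul_eq_mul_div, le_div_iff₀ (by positivity)]
      nlinarith [hq]
    have hee : Real.exp (lam0 * |ξ ω|) * Real.exp (lam0 * |ξ ω|) = Real.exp (δ * |ξ ω|) := by
      rw [← Real.exp_add, hlam0def]; ring_nf
    rw [Real.norm_eq_abs, Real.norm_eq_abs, abs_of_nonneg (by positivity),
      abs_of_nonneg (by positivity : (0:ℝ) ≤ 4 / lam0 ^ 2 * Real.exp (δ * |ξ ω|))]
    calc ξ ω ^ 2 * Real.exp (lam0 * |ξ ω|)
        ≤ (4 / lam0 ^ 2 * Real.exp (lam0 * |ξ ω|)) * Real.exp (lam0 * |ξ ω|) :=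
          mul_le_mul_of_nonneg_right hsq (Real.exp_pos _).le
      _ = 4 / lam0 ^ 2 * Real.exp (δ * |ξ ω|) := by rw [mul_assoc, hee]
  set M : ℝ := ∫ ω, ξ ω ^ 2 * Real.exp (lam0 * |ξ ω|) ∂μ with hMdef
  have hM0 : 0 ≤ M := integral_nonneg (fun ω => by positivity)
  set C : ℝ := M / 2 + 1 with hCdef
  have hC : 0 < C := by positivity
  -- log of the Laplace transform is at most C l² for |l| ≤ lam0
  have hψlog : ∀ l : ℝ, |l| ≤ lam0 →
      Real.log (∫ ω, Real.exp (l * ξ ω) ∂μ) ≤ C * l ^ 2 := by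
    intro l hl
    have hlδ : |l| ≤ δ := hl.trans (by rw [hlam0def]; linarith)
    have hint := hexpint l hlδ
    -- lower bound 1 ≤ ∫ exp(lξ)
    have hIlin : Integrable (fun ω => 1 + l * ξ ω) μ :=
      (integrable_const 1).add (hξint.const_mul l)
    have hlb : (1:ℝ) ≤ ∫ ω, Real.exp (l * ξ ω) ∂μ := by
      have h := integral_mono hIlin hint
        (fun ω => by linarith [Real.add_one_le_exp (l * ξ ω)])
      rwa [integral_add (integrable_const 1) (hξint.const_mul l), integral_const,
        integral_const_mul, hmean, mul_zero, add_zero, probReal_univ,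
        smul_eq_mul, mul_one] at h
    -- upper bound via Taylor
    have hup : ∫ ω, Real.exp (l * ξ ω) ∂μ ≤ 1 + l ^ 2 / 2 * M := by
      have hpt : ∀ ω, Real.exp (l * ξ ω)
          ≤ 1 + l * ξ ω + l ^ 2 / 2 * (ξ ω ^ 2 * Real.exp (lam0 * |ξ ω|)) := by
        intro ω
        have h := exp_taylor (l * ξ ω)
        have habs : |l * ξ ω| ≤ lam0 * |ξ ω| := by
          rw [abs_mul]
          exact mul_le_mul_of_nonneg_right hl (abs_nonneg _)
        have hmono : Real.exp |l * ξ ω| ≤ Real.exp (lam0 * |ξ ω|) := Real.exp_le_exp.2 habs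
        have hsq : (l * ξ ω) ^ 2 = l ^ 2 * ξ ω ^ 2 := by ring
        nlinarith [sq_nonneg (l * ξ ω), sq_nonneg l, sq_nonneg (ξ ω),
          mul_nonneg (sq_nonneg l) (sq_nonneg (ξ ω))]
      have hIrhs : Integrable
          (fun ω => 1 + l * ξ ω + l ^ 2 / 2 * (ξ ω ^ 2 * Real.exp (lam0 * |ξ ω|))) μ :=
        hIlin.add (hM.const_mul (l ^ 2 / 2))
      have h := integral_mono hint hIrhs (fun ω => hpt ω)
      rwa [integral_add hIlin (hM.const_mul _),
        integral_add (integrable_const 1) (hξint.const_mul l), integral_const,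
        integral_const_mul, integral_const_mul, hmean, mul_zero, add_zero, probReal_univ,
        smul_eq_mul, mul_one, ← hMdef] at h
    have hlog := Real.log_le_sub_one_of_pos (lt_of_lt_of_le one_pos hlb)
    have hCl : C * l ^ 2 = l ^ 2 / 2 * M + l ^ 2 := by rw [hCdef]; ring
    calc Real.log (∫ ω, Real.exp (l * ξ ω) ∂μ)
        ≤ (∫ ω, Real.exp (l * ξ ω) ∂μ) - 1 := hlog
      _ ≤ l ^ 2 / 2 * M := by linarith
      _ ≤ l ^ 2 / 2 * M + l ^ 2 := by nlinarith [sq_nonneg l]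
      _ = C * l ^ 2 := hCl.symm
  -- key bound : Λ(α) ≥ l α − C l² for |l| ≤ lam0
  have hkey : ∀ l : ℝ, |l| ≤ lam0 → ∀ α : ℝ,
      ENNReal.ofReal (l * α - C * l ^ 2) ≤ devFn μ ξ α := by
    intro l hl α
    have hint := hexpint l (hl.trans (by rw [hlam0def]; linarith))
    calc ENNReal.ofReal (l * α - C * l ^ 2)
        ≤ ENNReal.ofReal (l * α - Real.log (∫ ω, Real.exp (l * ξ ω) ∂μ)) := by
          exact ENNReal.ofReal_le_ofReal (by linarith [hψlog l hl])
      _ ≤ devFn μ ξ α := by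
          rw [devFn]
          exact le_iSup₂ (f := fun (l : ℝ)
            (_ : Integrable (fun ω => Real.exp (l * ξ ω)) μ) =>
            ENNReal.ofReal (l * α - Real.log (∫ ω, Real.exp (l * ξ ω) ∂μ))) l hint
  -- choose the constant
  refine ⟨min (1 / (4 * C)) (lam0 / 2), lt_min (by positivity) (by positivity), fun α => ?_⟩
  set c : ℝ := min (1 / (4 * C)) (lam0 / 2) with hcdef
  have hc : 0 < c := lt_min (by positivity) (by positivity)
  rcases le_or_gt |α| (2 * C * lam0) with hα | hα
  · -- small α : take l = α / (2C)
    set l : ℝ := α / (2 * C) with hldef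
    have hl : |l| ≤ lam0 := by
      rw [hldef, abs_div, abs_of_pos (by positivity : (0:ℝ) < 2 * C),
        div_le_iff₀ (by positivity)]
      linarith [hα]
    refine le_trans (ENNReal.ofReal_le_ofReal ?_) (hkey l hl α)
    have h1 : c * min (α ^ 2) |α| ≤ 1 / (4 * C) * α ^ 2 :=
      calc c * min (α ^ 2) |α| ≤ c * α ^ 2 :=
            mul_le_mul_of_nonneg_left (min_le_left _ _) hc.le
        _ ≤ 1 / (4 * C) * α ^ 2 :=
            mul_le_mul_of_nonneg_right (min_le_left _ _) (sq_nonneg α)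
    have h2 : l * α - C * l ^ 2 = 1 / (4 * C) * α ^ 2 := by
      rw [hldef]; field_simp; ring
    exact h1.trans_eq h2.symm
  · -- large α : take l = ±lam0
    set l : ℝ := if 0 ≤ α then lam0 else -lam0 with hldef
    have hl : |l| ≤ lam0 := by
      rw [hldef]; split_ifs <;> simp [abs_of_pos hlam0, abs_of_neg, hlam0.le] <;>
        rw [abs_of_neg (by linarith : -lam0 < 0)] <;> simp
    have hlα : l * α = lam0 * |α| := by
      rw [hldef]; split_ifs with h
      · rw [abs_of_nonneg h]
      · rw [abs_of_neg (not_le.1 h)]; ring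
    have hlsq : l ^ 2 = lam0 ^ 2 := by
      rw [hldef]; split_ifs <;> ring
    refine le_trans (ENNReal.ofReal_le_ofReal ?_) (hkey l hl α)
    rw [hlα, hlsq]
    have h1 : c * min (α ^ 2) |α| ≤ lam0 / 2 * |α| :=
      calc c * min (α ^ 2) |α| ≤ c * |α| :=
            mul_le_mul_of_nonneg_left (min_le_right _ _) hc.le
        _ ≤ lam0 / 2 * |α| :=
            mul_le_mul_of_nonneg_right (min_le_right _ _) (abs_nonneg α)
    nlinarith [hlam0, hα]
end

section
/- Let ξ be a real random variable satisfying Cramér's condition [C₀], with deviation function Λ and Cramér interval endpoints λ₊, λ₋. Then for every U > 0 and every right-continuous function f of bounded variation on [0, U] with f(0) = 0, one has J₀^U(f) ≥ U · Λ(f(U)/U). -/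
open MeasureTheory ProbabilityTheory Filter Set
open scoped ENNReal

/-- `λ₊ = sup{λ : ψ(λ) < ∞}`, viewed in `[0,∞]` (it is positive under `[C₀]`). -/
noncomputable def lamPlus {Ω : Type*} [MeasurableSpace Ω] (μ : Measure Ω) (ξ : Ω → ℝ) : ℝ≥0∞ :=
  ⨆ (l : ℝ) (_ : Integrable (fun ω => Real.exp (l * ξ ω)) μ), ENNReal.ofReal l

/-- `|λ₋| = -inf{λ : ψ(λ) < ∞}`, viewed in `[0,∞]` (it is positive under `[C₀]`). -/
noncomputable def lamMinusAbs {Ω : Type*} [MeasurableSpace Ω] (μ : Measure Ω) (ξ : Ω → ℝ) :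
    ℝ≥0∞ :=
  ⨆ (l : ℝ) (_ : Integrable (fun ω => Real.exp (l * ξ ω)) μ), ENNReal.ofReal (-l)

/-- The functional `J₀^U` evaluated on (the Lebesgue–Stieltjes signed measure `ν` of) a
right-continuous function of bounded variation `f` with `f(0) = 0`, `f(t) = ν((0,t])`:
`J₀^U(f) = ∫₀^U Λ(f_a'(t)) dt + λ₊ · μ_s⁺((0,U]) + |λ₋| · μ_s⁻((0,U])`,
where `f_a'` is the Radon–Nikodym density of `ν` w.r.t. Lebesgue measure and
`μ_s⁺ − μ_s⁻` is the Jordan decomposition of the singular part of `ν`. -/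
noncomputable def J0 {Ω : Type*} [MeasurableSpace Ω] (μ : Measure Ω) (ξ : Ω → ℝ)
    (ν : SignedMeasure ℝ) (U : ℝ) : ℝ≥0∞ :=
  (∫⁻ t in Set.Ioc (0 : ℝ) U, devFn μ ξ (ν.rnDeriv volume t)) +
    lamPlus μ ξ * (ν.singularPart volume).toJordanDecomposition.posPart (Set.Ioc (0 : ℝ) U) +
    lamMinusAbs μ ξ * (ν.singularPart volume).toJordanDecomposition.negPart (Set.Ioc (0 : ℝ) U)

/-- under `[C₀]`, for every `U > 0` and every right-continuous function `f` of
bounded variation on `[0,U]` with `f(0) = 0` (represented by its Lebesgue–Stieltjes signed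
measure `ν` via `f(t) = ν((0,t])`), one has `J₀^U(f) ≥ U · Λ(f(U)/U)`. -/
theorem J0_ge_of_endpoint {Ω : Type*} [MeasurableSpace Ω] (μ : Measure Ω)
    [IsProbabilityMeasure μ] (ξ : Ω → ℝ) (hmeas : Measurable ξ)
    (hC0 : ∃ δ > 0, Integrable (fun ω => Real.exp (δ * |ξ ω|)) μ)
    (U : ℝ) (hU : 0 < U) (f : ℝ → ℝ) (ν : SignedMeasure ℝ)
    (hf : ∀ t ∈ Set.Icc (0 : ℝ) U, f t = ν (Set.Ioc (0 : ℝ) t)) :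
    ENNReal.ofReal U * devFn μ ξ (f U / U) ≤ J0 μ ξ ν U := by
  set d : ℝ → ℝ := ν.rnDeriv volume with hd
  set s : SignedMeasure ℝ := ν.singularPart volume with hs
  set P : ℝ≥0∞ := s.toJordanDecomposition.posPart (Set.Ioc (0 : ℝ) U) with hP
  set N : ℝ≥0∞ := s.toJordanDecomposition.negPart (Set.Ioc (0 : ℝ) U) with hN
  have hPne : P ≠ ∞ := measure_ne_top _ _
  have hNne : N ≠ ∞ := measure_ne_top _ _
  have hd_int : Integrable d volume := ν.integrable_rnDeriv volume
  have hs_apply : s (Set.Ioc (0 : ℝ) U) = P.toReal - N.toReal := by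
    conv_lhs => rw [← s.toSignedMeasure_toJordanDecomposition,
      JordanDecomposition.toSignedMeasure,
      Measure.toSignedMeasure_sub_apply measurableSet_Ioc]
    rfl
  have hν_apply : ν (Set.Ioc (0 : ℝ) U)
      = s (Set.Ioc (0 : ℝ) U) + ∫ t in Set.Ioc (0 : ℝ) U, d t := by
    conv_lhs => rw [← ν.singularPart_add_withDensity_rnDeriv_eq (μ := volume)]
    rw [VectorMeasure.add_apply, withDensityᵥ_apply hd_int measurableSet_Ioc]
  rw [devFn, ENNReal.mul_iSup]
  refine iSup_le fun l => ?_
  rw [ENNReal.mul_iSup]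
  refine iSup_le fun hl => ?_
  set L : ℝ := Real.log (∫ ω, Real.exp (l * ξ ω) ∂μ) with hL
  -- the finite restricted measure
  have hfin : IsFiniteMeasure (volume.restrict (Set.Ioc (0 : ℝ) U)) := by
    constructor
    rw [Measure.restrict_apply_univ, Real.volume_Ioc]
    exact ENNReal.ofReal_lt_top
  have hg_int : Integrable (fun t => l * d t - L) (volume.restrict (Set.Ioc (0 : ℝ) U)) :=
    ((hd_int.restrict).const_mul l).sub (integrable_const L)
  have hvolIoc : (volume (Set.Ioc (0 : ℝ) U)).toReal = U := by
    rw [Real.volume_Ioc, ENNReal.toReal_ofReal (by linarith)]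
    ring
  -- value of the integral of g
  have hg_val : ∫ t in Set.Ioc (0 : ℝ) U, (l * d t - L)
      = l * (∫ t in Set.Ioc (0 : ℝ) U, d t) - U * L := by
    rw [integral_sub ((hd_int.restrict).const_mul l) (integrable_const L),
      integral_const, measureReal_def, integral_const_mul, Measure.restrict_apply_univ, hvolIoc, smul_eq_mul]
  -- LHS real computation
  have hfU : f U = ν (Set.Ioc (0 : ℝ) U) := hf U ⟨le_of_lt hU, le_refl U⟩
  have hlhs : ENNReal.ofReal U * ENNReal.ofReal (l * (f U / U) - L)
      = ENNReal.ofReal ((∫ t in Set.Ioc (0 : ℝ) U, (l * d t - L))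
        + l * (P.toReal - N.toReal)) := by
    rw [← ENNReal.ofReal_mul hU.le]
    congr 1
    rw [hg_val, hfU, hν_apply, hs_apply]
    field_simp
    ring
  rw [hlhs]
  -- bound ofReal of integral by lintegral
  have h1 : ENNReal.ofReal (∫ t in Set.Ioc (0 : ℝ) U, (l * d t - L))
      ≤ ∫⁻ t in Set.Ioc (0 : ℝ) U, devFn μ ξ (d t) := by
    have hmax : Integrable (fun t => max (l * d t - L) 0)
        (volume.restrict (Set.Ioc (0 : ℝ) U)) := hg_int.pos_part
    calc ENNReal.ofReal (∫ t in Set.Ioc (0 : ℝ) U, (l * d t - L))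
        ≤ ENNReal.ofReal (∫ t in Set.Ioc (0 : ℝ) U, max (l * d t - L) 0) :=
          ENNReal.ofReal_le_ofReal
            (integral_mono hg_int hmax fun t => le_max_left _ _)
      _ = ∫⁻ t in Set.Ioc (0 : ℝ) U, ENNReal.ofReal (max (l * d t - L) 0) :=
          ofReal_integral_eq_lintegral_ofReal hmax
            (Filter.Eventually.of_forall fun t => le_max_right _ _)
      _ ≤ ∫⁻ t in Set.Ioc (0 : ℝ) U, devFn μ ξ (d t) := by
          refine lintegral_mono fun t => ?_
          have : ENNReal.ofReal (max (l * d t - L) 0) = ENNReal.ofReal (l * d t - L) := by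
            rcases le_total (l * d t - L) 0 with h | h
            · rw [max_eq_right h, ENNReal.ofReal_of_nonpos h, ENNReal.ofReal_zero]
            · rw [max_eq_left h]
          rw [this, devFn]
          exact le_iSup₂ (f := fun (l' : ℝ)
            (_ : Integrable (fun ω => Real.exp (l' * ξ ω)) μ) =>
            ENNReal.ofReal (l' * d t - Real.log (∫ ω, Real.exp (l' * ξ ω) ∂μ))) l hl
  -- bound the singular contribution
  have h2 : ENNReal.ofReal (l * (P.toReal - N.toReal))
      ≤ ENNReal.ofReal l * P + ENNReal.ofReal (-l) * N := by
    rcases le_total 0 l with h | h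
    · calc ENNReal.ofReal (l * (P.toReal - N.toReal))
          ≤ ENNReal.ofReal (l * P.toReal) := by
            refine ENNReal.ofReal_le_ofReal ?_
            have : 0 ≤ l * N.toReal := mul_nonneg h ENNReal.toReal_nonneg
            nlinarith
        _ = ENNReal.ofReal l * P := by
            rw [ENNReal.ofReal_mul h, ENNReal.ofReal_toReal hPne]
        _ ≤ _ := le_self_add
    · calc ENNReal.ofReal (l * (P.toReal - N.toReal))
          ≤ ENNReal.ofReal ((-l) * N.toReal) := by
            refine ENNReal.ofReal_le_ofReal ?_
            have : l * P.toReal ≤ 0 := mul_nonpos_of_nonpos_of_nonneg h ENNReal.toReal_nonneg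
            nlinarith
        _ = ENNReal.ofReal (-l) * N := by
            rw [ENNReal.ofReal_mul (by linarith), ENNReal.ofReal_toReal hNne]
        _ ≤ _ := le_add_self
  have hplus : ENNReal.ofReal l ≤ lamPlus μ ξ :=
    le_iSup₂ (f := fun (l' : ℝ) (_ : Integrable (fun ω => Real.exp (l' * ξ ω)) μ) =>
      ENNReal.ofReal l') l hl
  have hminus : ENNReal.ofReal (-l) ≤ lamMinusAbs μ ξ :=
    le_iSup₂ (f := fun (l' : ℝ) (_ : Integrable (fun ω => Real.exp (l' * ξ ω)) μ) =>
      ENNReal.ofReal (-l')) l hl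
  calc ENNReal.ofReal ((∫ t in Set.Ioc (0 : ℝ) U, (l * d t - L)) + l * (P.toReal - N.toReal))
      ≤ ENNReal.ofReal (∫ t in Set.Ioc (0 : ℝ) U, (l * d t - L))
        + ENNReal.ofReal (l * (P.toReal - N.toReal)) := ENNReal.ofReal_add_le
    _ ≤ (∫⁻ t in Set.Ioc (0 : ℝ) U, devFn μ ξ (d t))
        + (ENNReal.ofReal l * P + ENNReal.ofReal (-l) * N) := add_le_add h1 h2
    _ ≤ (∫⁻ t in Set.Ioc (0 : ℝ) U, devFn μ ξ (d t))
        + (lamPlus μ ξ * P + lamMinusAbs μ ξ * N) := by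
        gcongr
    _ = J0 μ ξ ν U := by rw [J0]; ring
end

section
/- Let ξ be a nondegenerate real random variable with E[ξ] = 0 satisfying Cramér's condition [C₀]. Then there exists a constant C < ∞ (depending only on the law of ξ) such that for every N ≥ 1, every U ≥ 1, and every right-continuous function f of bounded variation on [0, ∞) with f(0) = 0 and J(f) ≤ N, one has |f(U)| ≤ C · √U · N. -/
open MeasureTheory ProbabilityTheory Filter Set
open scoped ENNReal

/-- A function `f` with `f(0) = 0` is right-continuous of locally bounded variation on `[0,∞)`
iff on every interval `[0,U]` it is represented as `f(t) = ν((0,t])` by some (finite)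
Lebesgue–Stieltjes signed measure `ν`. -/
def IsLocBV (f : ℝ → ℝ) : Prop :=
  ∀ U : ℝ, 0 < U → ∃ ν : SignedMeasure ℝ, ∀ t ∈ Set.Icc (0 : ℝ) U, f t = ν (Set.Ioc (0 : ℝ) t)

/-- The rate function `J(f) = sup_{U>0} J₀^U(f)`, where `J₀^U(f)` is computed through any
Lebesgue–Stieltjes signed measure representing `f` on `[0,U]`. -/
noncomputable def Jrate {Ω : Type*} [MeasurableSpace Ω] (μ : Measure Ω) (ξ : Ω → ℝ)
    (f : ℝ → ℝ) : ℝ≥0∞ :=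
  ⨆ (U : ℝ) (_ : 0 < U),
    ⨅ (ν : SignedMeasure ℝ) (_ : ∀ t ∈ Set.Icc (0 : ℝ) U, f t = ν (Set.Ioc (0 : ℝ) t)),
      J0 μ ξ ν U


lemma exp_le_quad (u : ℝ) : Real.exp u ≤ 1 + u + u^2 * Real.exp |u| := by
  rcases le_or_gt (|u|) 1 with h | h
  · have h1 := (abs_le.mp (Real.abs_exp_sub_one_sub_id_le h)).2
    have h2 : (1:ℝ) ≤ Real.exp |u| := Real.one_le_exp (abs_nonneg u)
    nlinarith [sq_nonneg u]
  · rcases le_or_gt 0 u with hu | hu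
    · have h1 : (1:ℝ) < u := by rwa [abs_of_nonneg hu] at h
      rw [abs_of_nonneg hu]
      nlinarith [Real.exp_pos u, mul_nonneg (by nlinarith : (0:ℝ) ≤ u^2 - 1) (Real.exp_pos u).le]
    · have h1 : u < -1 := by rw [abs_of_neg hu] at h; linarith
      have e1 : Real.exp u ≤ 1 := Real.exp_le_one_iff.mpr (by linarith)
      have e2 : (1:ℝ) ≤ Real.exp |u| := Real.one_le_exp (abs_nonneg u)
      nlinarith [sq_nonneg u]

lemma sq_mul_exp_half_le {δ x : ℝ} (hδ : 0 < δ) :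
    x^2 * Real.exp (δ/2 * |x|) ≤ 16/δ^2 * Real.exp (δ * |x|) := by
  have h2 : 1 + δ/4*|x| ≤ Real.exp (δ/4*|x|) := by linarith [Real.add_one_le_exp (δ/4*|x|)]
  have h3 : Real.exp (δ/2*|x|) = Real.exp (δ/4*|x|) * Real.exp (δ/4*|x|) := by
    rw [← Real.exp_add]; ring_nf
  have h4 : 0 ≤ δ/4*|x| := by positivity
  have h1 : (δ/4*|x|)^2 ≤ Real.exp (δ/2 * |x|) := by rw [h3]; nlinarith
  have h5 : x^2 ≤ 16/δ^2 * Real.exp (δ/2*|x|) := by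
    have hδ2 : (0:ℝ) < δ^2 := by positivity
    have hs : (δ/4*|x|)^2 = δ^2 * x^2 / 16 := by rw [mul_pow, sq_abs]; ring
    rw [hs] at h1
    rw [div_mul_eq_mul_div, le_div_iff₀ hδ2]
    nlinarith
  calc x^2 * Real.exp (δ/2*|x|) ≤ (16/δ^2 * Real.exp (δ/2*|x|)) * Real.exp (δ/2*|x|) :=
        mul_le_mul_of_nonneg_right h5 (Real.exp_pos _).le
    _ = 16/δ^2 * Real.exp (δ*|x|) := by rw [mul_assoc, ← Real.exp_add]; ring_nf

lemma abs_le_lam_bound {M d : ℝ} (hM : 0 < M) (hd : 0 < d) {Λ : ℝ → ℝ≥0∞}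
    (hΛ : ∀ s, |s| ≤ d → ∀ α : ℝ, ENNReal.ofReal (s*α - M*s^2) ≤ Λ α)
    {a : ℝ} (ha : 0 < a) (α : ℝ) :
    ENNReal.ofReal |α| ≤ ENNReal.ofReal (a/2) + ENNReal.ofReal (2*M/a + 2/d) * Λ α := by
  have hK2 : (0:ℝ) ≤ 2/d := by positivity
  have hK1 : (0:ℝ) ≤ 2*M/a := by positivity
  rcases le_or_gt (|α|) (2*M*d) with hcase | hcase
  · have hs : |α/(2*M)| ≤ d := by
      rw [abs_div, abs_of_pos (by positivity : (0:ℝ) < 2*M), div_le_iff₀ (by positivity)]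
      linarith
    have h1 := hΛ _ hs α
    have hval : α/(2*M)*α - M*(α/(2*M))^2 = α^2/(4*M) := by field_simp; ring
    rw [hval] at h1
    have h2 : |α| ≤ a/2 + (2*M/a) * (α^2/(4*M)) := by
      have hr : (2*M/a) * (α^2/(4*M)) = α^2/(2*a) := by field_simp; ring
      rw [hr, show a/2 + α^2/(2*a) = (a^2+α^2)/(2*a) by field_simp,
        le_div_iff₀ (by positivity : (0:ℝ) < 2*a)]
      nlinarith [sq_nonneg (|α| - a), sq_abs α]
    calc ENNReal.ofReal |α| ≤ ENNReal.ofReal (a/2 + (2*M/a) * (α^2/(4*M))) :=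
          ENNReal.ofReal_le_ofReal h2
      _ = ENNReal.ofReal (a/2) + ENNReal.ofReal (2*M/a) * ENNReal.ofReal (α^2/(4*M)) := by
          rw [ENNReal.ofReal_add (by positivity) (by positivity), ENNReal.ofReal_mul hK1]
      _ ≤ ENNReal.ofReal (a/2) + ENNReal.ofReal (2*M/a + 2/d) * Λ α := by
          gcongr
          · linarith
    
  · have key : ∀ s : ℝ, |s| = d → s * α = d * |α| →
        ENNReal.ofReal |α| ≤ ENNReal.ofReal (a/2) + ENNReal.ofReal (2*M/a + 2/d) * Λ α := by
      intro s hs hsα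
      have h1 := hΛ s (le_of_eq hs) α
      have hval : s*α - M*s^2 = d*|α| - M*d^2 := by
        rw [hsα]; congr 1; rw [← sq_abs s, hs]
      rw [hval] at h1
      have h2 : |α| ≤ (2/d) * (d*|α| - M*d^2) := by
        have : M*d < |α|/2 := by nlinarith
        have hr : (2/d) * (d*|α| - M*d^2) = 2*|α| - 2*M*d := by field_simp
        rw [hr]; nlinarith
      calc ENNReal.ofReal |α| ≤ ENNReal.ofReal ((2/d) * (d*|α| - M*d^2)) :=
            ENNReal.ofReal_le_ofReal h2
        _ = ENNReal.ofReal (2/d) * ENNReal.ofReal (d*|α| - M*d^2) := ENNReal.ofReal_mul hK2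
        _ ≤ ENNReal.ofReal (2*M/a + 2/d) * Λ α := by gcongr; linarith
        _ ≤ ENNReal.ofReal (a/2) + ENNReal.ofReal (2*M/a + 2/d) * Λ α := le_add_self
    rcases le_or_gt 0 α with hα | hα
    · exact key d (abs_of_pos hd) (by rw [abs_of_nonneg hα])
    · exact key (-d) (by rw [abs_neg, abs_of_pos hd]) (by rw [abs_of_neg hα]; ring)


section
variable {Ω : Type*} [MeasurableSpace Ω] {μ : Measure Ω} [IsProbabilityMeasure μ] {ξ : Ω → ℝ}

variable {Ω : Type*} [MeasurableSpace Ω] {μ : Measure Ω} [IsProbabilityMeasure μ] {ξ : Ω → ℝ}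

lemma integrable_xi (hmeas : Measurable ξ) {δ : ℝ} (hδ : 0 < δ)
    (hint : Integrable (fun ω => Real.exp (δ * |ξ ω|)) μ) : Integrable ξ μ := by
  refine (hint.const_mul (1/δ)).mono hmeas.aestronglyMeasurable (ae_of_all _ fun ω => ?_)
  have h1 : δ * |ξ ω| + 1 ≤ Real.exp (δ * |ξ ω|) := Real.add_one_le_exp _
  have h2 : 0 < Real.exp (δ * |ξ ω|) := Real.exp_pos _
  rw [Real.norm_eq_abs, Real.norm_eq_abs, abs_of_pos (by positivity : (0:ℝ) < 1/δ * Real.exp (δ * |ξ ω|))]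
  rw [← sub_nonneg]
  have : 1/δ * Real.exp (δ * |ξ ω|) - |ξ ω| = (Real.exp (δ * |ξ ω|) - δ * |ξ ω|)/δ := by
    field_simp
  rw [this]
  exact div_nonneg (by linarith) hδ.le

lemma integrable_exp_s (hmeas : Measurable ξ) {δ s : ℝ} (hδ : 0 < δ)
    (hint : Integrable (fun ω => Real.exp (δ * |ξ ω|)) μ) (hs : |s| ≤ δ) :
    Integrable (fun ω => Real.exp (s * ξ ω)) μ := by
  refine hint.mono ((Real.measurable_exp.comp (hmeas.const_mul s)).aestronglyMeasurable)
    (ae_of_all _ fun ω => ?_)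
  rw [Real.norm_eq_abs, Real.norm_eq_abs, abs_of_pos (Real.exp_pos _), abs_of_pos (Real.exp_pos _)]
  apply Real.exp_le_exp.mpr
  calc s * ξ ω ≤ |s * ξ ω| := le_abs_self _
    _ = |s| * |ξ ω| := abs_mul _ _
    _ ≤ δ * |ξ ω| := mul_le_mul_of_nonneg_right hs (abs_nonneg _)

lemma devFn_lb (hmeas : Measurable ξ) {δ : ℝ} (hδ : 0 < δ)
    (hint : Integrable (fun ω => Real.exp (δ * |ξ ω|)) μ)
    (hmean : ∫ ω, ξ ω ∂μ = 0) {s : ℝ} (hs : |s| ≤ δ/2) (α : ℝ) :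
    ENNReal.ofReal (s*α - (16/δ^2 * ∫ ω, Real.exp (δ * |ξ ω|) ∂μ) * s^2) ≤ devFn μ ξ α := by
  set E := ∫ ω, Real.exp (δ * |ξ ω|) ∂μ with hE
  set M := 16/δ^2 * E with hM
  have hsδ : |s| ≤ δ := le_trans hs (by linarith)
  have hint_s : Integrable (fun ω => Real.exp (s * ξ ω)) μ := integrable_exp_s hmeas hδ hint hsδ
  have hξ : Integrable ξ μ := integrable_xi hmeas hδ hint
  -- pointwise bound
  have hpt : ∀ ω, Real.exp (s * ξ ω) ≤ 1 + s * ξ ω + s^2 * (16/δ^2) * Real.exp (δ * |ξ ω|) := by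
    intro ω
    have h1 := exp_le_quad (s * ξ ω)
    have h2 : (s * ξ ω)^2 * Real.exp |s * ξ ω| ≤ s^2 * (ξ ω ^2 * Real.exp (δ/2 * |ξ ω|)) := by
      have : |s * ξ ω| ≤ δ/2 * |ξ ω| := by
        rw [abs_mul]; exact mul_le_mul_of_nonneg_right hs (abs_nonneg _)
      have h3 : Real.exp |s * ξ ω| ≤ Real.exp (δ/2 * |ξ ω|) := Real.exp_le_exp.mpr this
      have h4 : (s * ξ ω)^2 = s^2 * ξ ω^2 := by ring
      rw [h4, mul_assoc]
      exact mul_le_mul_of_nonneg_left (mul_le_mul_of_nonneg_left h3 (sq_nonneg _)) (sq_nonneg _)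
    have h5 : ξ ω^2 * Real.exp (δ/2 * |ξ ω|) ≤ 16/δ^2 * Real.exp (δ * |ξ ω|) :=
      sq_mul_exp_half_le hδ
    have h6 : s^2 * (ξ ω ^2 * Real.exp (δ/2 * |ξ ω|)) ≤ s^2 * (16/δ^2) * Real.exp (δ * |ξ ω|) := by
      rw [mul_assoc]
      exact mul_le_mul_of_nonneg_left h5 (sq_nonneg _)
    linarith
  -- integral bound
  have hψ : ∫ ω, Real.exp (s * ξ ω) ∂μ ≤ 1 + M * s^2 := by
    have h12 : Integrable (fun ω => 1 + s * ξ ω) μ := (integrable_const 1).add (hξ.const_mul s)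
    have hcm : Integrable (fun ω => s^2 * (16/δ^2) * Real.exp (δ * |ξ ω|)) μ := hint.const_mul _
    have hRHS : Integrable (fun ω => 1 + s * ξ ω + s^2 * (16/δ^2) * Real.exp (δ * |ξ ω|)) μ :=
      h12.add hcm
    have hmono := integral_mono hint_s hRHS (fun ω => hpt ω)
    have hcalc : ∫ ω, (1 + s * ξ ω + s^2 * (16/δ^2) * Real.exp (δ * |ξ ω|)) ∂μ
        = 1 + M * s^2 := by
      rw [integral_add h12 hcm, integral_add (integrable_const 1) (hξ.const_mul s),
        integral_const, integral_const_mul, integral_const_mul, hmean, probReal_univ]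
      simp only [ENNReal.toReal_one, smul_eq_mul, mul_one, mul_zero, add_zero, hM, hE]
      ring
    rw [hcalc] at hmono
    exact hmono
  have hψpos : 0 < ∫ ω, Real.exp (s * ξ ω) ∂μ := by
    have := mgf_pos (X := ξ) (μ := μ) (t := s) hint_s
    simpa [mgf] using this
  have hlog : Real.log (∫ ω, Real.exp (s * ξ ω) ∂μ) ≤ M * s^2 := by
    have hMpos : 0 ≤ M * s ^ 2 := by
      have : (0:ℝ) < E := lt_of_lt_of_le (by norm_num)
        (le_trans (by simp [measure_univ] : (1:ℝ) ≤ ∫ (_ : Ω), (1:ℝ) ∂μ)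
          (integral_mono (integrable_const 1) hint (fun ω => Real.one_le_exp (by positivity))))
      positivity
    calc Real.log (∫ ω, Real.exp (s * ξ ω) ∂μ) ≤ Real.log (1 + M * s^2) :=
          Real.log_le_log hψpos hψ
      _ ≤ (1 + M * s^2) - 1 := Real.log_le_sub_one_of_pos (by linarith)
      _ = M * s^2 := by ring
  refine le_iSup₂_of_le s hint_s (ENNReal.ofReal_le_ofReal ?_)
  linarith

set_option maxHeartbeats 1000000 in
/-- The core quantitative bound. -/
lemma key_bound {M d δ : ℝ} (hM : 0 < M) (hd : 0 < d) (hδ : 0 < δ)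
    (hΛ : ∀ s, |s| ≤ d → ∀ α : ℝ, ENNReal.ofReal (s*α - M*s^2) ≤ devFn μ ξ α)
    (hlamP : ENNReal.ofReal δ ≤ lamPlus μ ξ)
    (hlamM : ENNReal.ofReal δ ≤ lamMinusAbs μ ξ)
    {N' U : ℝ} (hN1 : 1 ≤ N') (hU1 : 1 ≤ U)
    (ν : SignedMeasure ℝ) (hJ0 : J0 μ ξ ν U ≤ ENNReal.ofReal N') :
    |ν (Set.Ioc (0:ℝ) U)| ≤ (1 + 2*M + 2/d + 2/δ) * Real.sqrt U * N' := by
  have hN0 : (0:ℝ) < N' := by linarith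
  have hU0 : (0:ℝ) < U := by linarith
  set g := ν.rnDeriv volume with hg
  set P := (ν.singularPart volume).toJordanDecomposition.posPart with hP
  set Q := (ν.singularPart volume).toJordanDecomposition.negPart with hQ
  -- decomposition of ν (Ioc 0 U)
  have hdec := ν.singularPart_add_withDensity_rnDeriv_eq volume
  have happ : ν (Set.Ioc (0:ℝ) U)
      = (ν.singularPart volume) (Set.Ioc (0:ℝ) U) + ∫ t in Set.Ioc (0:ℝ) U, g t := by
    conv_lhs => rw [← hdec]
    rw [VectorMeasure.add_apply,
      withDensityᵥ_apply (SignedMeasure.integrable_rnDeriv ν volume) measurableSet_Ioc]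
  have hσ : (ν.singularPart volume) (Set.Ioc (0:ℝ) U)
      = (P (Set.Ioc (0:ℝ) U)).toReal - (Q (Set.Ioc (0:ℝ) U)).toReal := by
    conv_lhs => rw [← (ν.singularPart volume).toSignedMeasure_toJordanDecomposition]
    simp only [JordanDecomposition.toSignedMeasure]
    rw [Measure.toSignedMeasure_sub_apply measurableSet_Ioc]
    rfl
  -- the three parts of hJ0
  have hA : (∫⁻ t in Set.Ioc (0:ℝ) U, devFn μ ξ (g t)) ≤ ENNReal.ofReal N' :=
    (le_self_add.trans le_self_add).trans hJ0
  have hBp : lamPlus μ ξ * P (Set.Ioc (0:ℝ) U) ≤ ENNReal.ofReal N' :=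
    (le_add_self.trans le_self_add).trans hJ0
  have hBm : lamMinusAbs μ ξ * Q (Set.Ioc (0:ℝ) U) ≤ ENNReal.ofReal N' :=
    le_add_self.trans hJ0
  -- singular part bounds
  have hsing : ∀ (m : ℝ≥0∞), m ≠ ⊤ → ENNReal.ofReal δ * m ≤ ENNReal.ofReal N' →
      m.toReal ≤ N'/δ := by
    intro m hm h
    have h2 : m ≤ ENNReal.ofReal N' / ENNReal.ofReal δ := by
      rw [ENNReal.le_div_iff_mul_le (Or.inl (ENNReal.ofReal_pos.mpr hδ).ne') (Or.inl ENNReal.ofReal_ne_top)]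
      rwa [mul_comm]
    rw [← ENNReal.ofReal_div_of_pos hδ] at h2
    exact ENNReal.toReal_le_of_le_ofReal (by positivity) h2
  have hPb : (P (Set.Ioc (0:ℝ) U)).toReal ≤ N'/δ := by
    refine hsing _ (measure_ne_top _ _) (le_trans ?_ hBp)
    exact mul_le_mul_left hlamP _
  have hQb : (Q (Set.Ioc (0:ℝ) U)).toReal ≤ N'/δ := by
    refine hsing _ (measure_ne_top _ _) (le_trans ?_ hBm)
    exact mul_le_mul_left hlamM _
  -- absolutely continuous part
  set a := Real.sqrt (N'/U) with ha
  have ha0 : 0 < a := Real.sqrt_pos.mpr (by positivity)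
  set K := 2*M/a + 2/d with hK
  have hK0 : (0:ℝ) ≤ K := by positivity
  have hlin : (∫⁻ t in Set.Ioc (0:ℝ) U, ENNReal.ofReal |g t|)
      ≤ ENNReal.ofReal ((a/2)*U + K*N') := by
    calc (∫⁻ t in Set.Ioc (0:ℝ) U, ENNReal.ofReal |g t|)
        ≤ ∫⁻ t in Set.Ioc (0:ℝ) U,
            (ENNReal.ofReal (a/2) + ENNReal.ofReal K * devFn μ ξ (g t)) :=
          lintegral_mono fun t => abs_le_lam_bound hM hd hΛ ha0 (g t)
      _ = ENNReal.ofReal (a/2) * volume (Set.Ioc (0:ℝ) U)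
            + ENNReal.ofReal K * ∫⁻ t in Set.Ioc (0:ℝ) U, devFn μ ξ (g t) := by
          rw [lintegral_add_left measurable_const, lintegral_const,
            Measure.restrict_apply_univ, lintegral_const_mul' _ _ ENNReal.ofReal_ne_top]
      _ ≤ ENNReal.ofReal (a/2) * ENNReal.ofReal U + ENNReal.ofReal K * ENNReal.ofReal N' := by
          gcongr
          all_goals first
            | exact hA
            | rw [Real.volume_Ioc, sub_zero]
      _ = ENNReal.ofReal ((a/2)*U + K*N') := by
          rw [← ENNReal.ofReal_mul (by positivity), ← ENNReal.ofReal_mul hK0,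
            ← ENNReal.ofReal_add (by positivity) (by positivity)]
  have hgint : Integrable g (volume.restrict (Set.Ioc (0:ℝ) U)) :=
    (SignedMeasure.integrable_rnDeriv ν volume).restrict
  have hgabs : ∫ t in Set.Ioc (0:ℝ) U, |g t| ≤ (a/2)*U + K*N' := by
    rw [← ENNReal.ofReal_le_ofReal_iff (by positivity),
      MeasureTheory.ofReal_integral_eq_lintegral_ofReal hgint.abs
        (ae_of_all _ fun t => abs_nonneg _)]
    exact hlin
  have hgb : |∫ t in Set.Ioc (0:ℝ) U, g t| ≤ (a/2)*U + K*N' := by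
    refine le_trans ?_ hgabs
    simpa [Real.norm_eq_abs] using
      norm_integral_le_integral_norm (μ := volume.restrict (Set.Ioc (0:ℝ) U)) g
  -- arithmetic
  set sN := Real.sqrt N' with hsN
  set sU := Real.sqrt U with hsU
  have hsN0 : 0 < sN := Real.sqrt_pos.mpr hN0
  have hsU0 : 0 < sU := Real.sqrt_pos.mpr hU0
  have hsN2 : sN^2 = N' := Real.sq_sqrt hN0.le
  have hsU2 : sU^2 = U := Real.sq_sqrt hU0.le
  have hsN1 : 1 ≤ sN := by nlinarith
  have hsU1 : 1 ≤ sU := by nlinarith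
  have hsNle : sN ≤ N' := by nlinarith
  have ha' : a = sN/sU := by
    rw [ha, hsN, hsU, ← Real.sqrt_div hN0.le]
  have t1 : (a/2)*U = sN*sU/2 := by
    rw [ha', ← hsU2]; field_simp
  have t2 : K*N' = 2*M*sU*sN + (2/d)*N' := by
    rw [hK, ha', ← hsN2]; field_simp
  have harith : sN*sU/2 + (2*M*sU*sN + (2/d)*N') + N'/δ + N'/δ
      ≤ (1 + 2*M + 2/d + 2/δ) * sU * N' := by
    have e1 : (0:ℝ) ≤ 2/d := by positivity
    have e2 : (0:ℝ) ≤ 2/δ := by positivity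
    have r1 : N'/δ = (2/δ)*N'/2 := by field_simp
    rw [r1]
    nlinarith [mul_nonneg (sub_nonneg.2 hsU1) hN0.le,
      mul_nonneg hsU0.le (sub_nonneg.2 hsNle),
      mul_nonneg (mul_nonneg hM.le hsU0.le) (sub_nonneg.2 hsNle),
      mul_nonneg e1 (mul_nonneg (sub_nonneg.2 hsU1) hN0.le),
      mul_nonneg e2 (mul_nonneg (sub_nonneg.2 hsU1) hN0.le)]
  calc |ν (Set.Ioc (0:ℝ) U)| ≤ (P (Set.Ioc (0:ℝ) U)).toReal + (Q (Set.Ioc (0:ℝ) U)).toReal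
        + |∫ t in Set.Ioc (0:ℝ) U, g t| := by
        rw [happ, hσ]
        have h1 := abs_add_le ((P (Set.Ioc (0:ℝ) U)).toReal - (Q (Set.Ioc (0:ℝ) U)).toReal)
          (∫ t in Set.Ioc (0:ℝ) U, g t)
        have h2 := abs_sub ((P (Set.Ioc (0:ℝ) U)).toReal) ((Q (Set.Ioc (0:ℝ) U)).toReal)
        have h3 : |(P (Set.Ioc (0:ℝ) U)).toReal| = (P (Set.Ioc (0:ℝ) U)).toReal :=
          abs_of_nonneg ENNReal.toReal_nonneg
        have h4 : |(Q (Set.Ioc (0:ℝ) U)).toReal| = (Q (Set.Ioc (0:ℝ) U)).toReal :=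
          abs_of_nonneg ENNReal.toReal_nonneg
        have h5 := abs_sub ((P (Set.Ioc (0:ℝ) U)).toReal) ((Q (Set.Ioc (0:ℝ) U)).toReal)
        linarith
      _ ≤ N'/δ + N'/δ + ((a/2)*U + K*N') := by gcongr
      _ = sN*sU/2 + (2*M*sU*sN + (2/d)*N') + N'/δ + N'/δ := by rw [t1, t2]; ring
      _ ≤ (1 + 2*M + 2/d + 2/δ) * sU * N' := harith
end




/-- if `ξ` is nondegenerate, centered and satisfies Cramér's condition `[C₀]`,
then there is a constant `C` (depending only on the law of `ξ`) such that for all `N ≥ 1`,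
`U ≥ 1` and every right-continuous `f` of locally bounded variation with `f(0) = 0` and
`J(f) ≤ N`, one has `|f(U)| ≤ C·√U·N`. -/
theorem abs_le_of_Jrate_le {Ω : Type*} [MeasurableSpace Ω] (μ : Measure Ω)
    [IsProbabilityMeasure μ] (ξ : Ω → ℝ) (hmeas : Measurable ξ)
    (hnondeg : ¬ ∃ c : ℝ, ξ =ᵐ[μ] fun _ => c)
    (hC0 : ∃ δ > 0, Integrable (fun ω => Real.exp (δ * |ξ ω|)) μ)
    (hmean : ∫ ω, ξ ω ∂μ = 0) :
    ∃ C : ℝ, ∀ N : ℝ, 1 ≤ N → ∀ U : ℝ, 1 ≤ U → ∀ f : ℝ → ℝ, IsLocBV f →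
      Jrate μ ξ f ≤ ENNReal.ofReal N → |f U| ≤ C * Real.sqrt U * N := by
  obtain ⟨δ, hδ, hint⟩ := hC0
  set E := ∫ ω, Real.exp (δ * |ξ ω|) ∂μ with hE
  have hE1 : 1 ≤ E := by
    refine le_trans (le_of_eq ?_) (integral_mono (integrable_const 1) hint
      (fun ω => Real.one_le_exp (by positivity)))
    simp
  set M := 16/δ^2 * E with hM
  have hM0 : 0 < M := by
    have : (0:ℝ) < E := by linarith
    positivity
  set d := δ/2 with hd
  have hd0 : 0 < d := by positivity
  have hΛ : ∀ s, |s| ≤ d → ∀ α : ℝ,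
      ENNReal.ofReal (s*α - M*s^2) ≤ devFn μ ξ α := fun s hs α =>
    devFn_lb hmeas hδ hint hmean hs α
  have hlamP : ENNReal.ofReal δ ≤ lamPlus μ ξ :=
    le_iSup₂_of_le δ (integrable_exp_s hmeas hδ hint (by rw [abs_of_pos hδ])) le_rfl
  have hlamM : ENNReal.ofReal δ ≤ lamMinusAbs μ ξ :=
    le_iSup₂_of_le (-δ) (integrable_exp_s hmeas hδ hint (by rw [abs_neg, abs_of_pos hδ]))
      (by rw [neg_neg])
  refine ⟨1 + 2*M + 2/d + 2/δ, ?_⟩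
  intro N hN U hU f hf hJ
  have hU0 : (0:ℝ) < U := lt_of_lt_of_le one_pos hU
  have hsU0 : 0 < Real.sqrt U := Real.sqrt_pos.mpr hU0
  have hC0' : 0 < (1 + 2*M + 2/d + 2/δ) * Real.sqrt U := by positivity
  have key : ∀ ε : ℝ, 0 < ε → |f U| ≤ (1 + 2*M + 2/d + 2/δ) * Real.sqrt U * (N + ε) := by
    intro ε hε
    have h1 : (⨅ (ν : SignedMeasure ℝ)
        (_ : ∀ t ∈ Set.Icc (0 : ℝ) U, f t = ν (Set.Ioc (0 : ℝ) t)), J0 μ ξ ν U)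
        ≤ Jrate μ ξ f :=
      le_iSup_of_le U (le_iSup_of_le hU0 le_rfl)
    have h2 : (⨅ (ν : SignedMeasure ℝ)
        (_ : ∀ t ∈ Set.Icc (0 : ℝ) U, f t = ν (Set.Ioc (0 : ℝ) t)), J0 μ ξ ν U)
        < ENNReal.ofReal (N + ε) := by
      refine lt_of_le_of_lt (h1.trans hJ) ?_
      exact (ENNReal.ofReal_lt_ofReal_iff_of_nonneg (by linarith)).mpr (by linarith)
    obtain ⟨ν, hν⟩ := iInf_lt_iff.mp h2
    obtain ⟨hrep, hJν⟩ := iInf_lt_iff.mp hν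
    have hfU : f U = ν (Set.Ioc (0:ℝ) U) := hrep U ⟨hU0.le, le_rfl⟩
    rw [hfU]
    exact key_bound hM0 hd0 hδ hΛ hlamP hlamM (by linarith) hU ν hJν.le
  refine le_of_forall_pos_le_add fun ε hε => ?_
  have h3 := key (ε / ((1 + 2*M + 2/d + 2/δ) * Real.sqrt U)) (by positivity)
  calc |f U| ≤ (1 + 2*M + 2/d + 2/δ) * Real.sqrt U
        * (N + ε / ((1 + 2*M + 2/d + 2/δ) * Real.sqrt U)) := h3
    _ = (1 + 2*M + 2/d + 2/δ) * Real.sqrt U * N + ε := by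
        field_simp
end

section
/- Let ξ be a nondegenerate real random variable with E[ξ] = 0 satisfying Cramér's condition [C₀]. If f is a right-continuous function of locally bounded variation on [0, ∞) with f(0) = 0 and J(f) < ∞, then lim_{t → ∞} f(t)/(1 + t) = 0. -/
open MeasureTheory ProbabilityTheory Filter Set
open scoped ENNReal

/-- The deviation (Cramér / Legendre) function of a real random variable `ξ`:
`Λ(α) = sup { λ·α − log E[e^{λξ}] : λ ∈ ℝ, E[e^{λξ}] < ∞ }`, as a value in `[0, ∞]`. -/

lemma aux_exp_le_quad (x : ℝ) : Real.exp x ≤ 1 + x + x ^ 2 * Real.exp |x| := by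
  have hexp1 : (1:ℝ) ≤ Real.exp |x| := Real.one_le_exp (abs_nonneg x)
  rcases le_or_gt (|x|) 1 with h | h
  · have h1 := abs_le.1 (Real.abs_exp_sub_one_sub_id_le h)
    nlinarith [sq_nonneg x]
  · rcases lt_or_ge x 0 with hx | hx
    · have hx1 : x < -1 := by rcases abs_cases x with hc | hc <;> linarith [hc.1, hc.2]
      have h1 : Real.exp x ≤ Real.exp (-1) := Real.exp_le_exp.2 (by linarith)
      have h2 : (2:ℝ) ≤ Real.exp 1 := by linarith [Real.add_one_le_exp 1]
      have h4 : Real.exp (-1) ≤ 1/2 := by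
        rw [Real.exp_neg 1, inv_le_comm₀ (by positivity) (by norm_num)]
        linarith
      nlinarith [sq_nonneg (x + 1/2), sq_nonneg x]
    · have hx1 : 1 < x := by rwa [abs_of_nonneg hx] at h
      rw [abs_of_nonneg hx]
      nlinarith [mul_nonneg (by nlinarith : (0:ℝ) ≤ x ^ 2 - 1) (Real.exp_pos x).le]

lemma aux_sq_le_exp {a : ℝ} (ha : 0 ≤ a) : a ^ 2 ≤ 4 * Real.exp a := by
  have h1 : a / 2 + 1 ≤ Real.exp (a / 2) := Real.add_one_le_exp _
  have h2 : Real.exp (a/2) * Real.exp (a/2) = Real.exp a := by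
    rw [← Real.exp_add]; ring_nf
  nlinarith [Real.exp_pos (a/2)]

/-- if `ξ` is nondegenerate, centered and satisfies Cramér's condition `[C₀]`,
and `f` is right-continuous of locally bounded variation on `[0,∞)` with `f(0) = 0` and
`J(f) < ∞`, then `f(t)/(1+t) → 0` as `t → ∞`. -/
theorem tendsto_zero_of_Jrate_lt_top {Ω : Type*} [MeasurableSpace Ω] (μ : Measure Ω)
    [IsProbabilityMeasure μ] (ξ : Ω → ℝ) (hmeas : Measurable ξ)
    (hnondeg : ¬ ∃ c : ℝ, ξ =ᵐ[μ] fun _ => c)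
    (hC0 : ∃ δ > 0, Integrable (fun ω => Real.exp (δ * |ξ ω|)) μ)
    (hmean : ∫ ω, ξ ω ∂μ = 0)
    (f : ℝ → ℝ) (hf : IsLocBV f) (hJ : Jrate μ ξ f ≠ ⊤) :
    Filter.Tendsto (fun t => f t / (1 + t)) Filter.atTop (nhds 0) := by
  obtain ⟨δ, hδ, hδint⟩ := hC0
  -- integrability for |l| ≤ δ
  have hint : ∀ l : ℝ, |l| ≤ δ → Integrable (fun ω => Real.exp (l * ξ ω)) μ := by
    intro l hl
    refine hδint.mono ((hmeas.const_mul l).exp).aestronglyMeasurable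
      (Filter.Eventually.of_forall fun ω => ?_)
    simp only [Real.norm_eq_abs, Real.abs_exp]
    refine Real.exp_le_exp.2 (le_trans (le_abs_self _) ?_)
    rw [abs_mul]
    exact mul_le_mul_of_nonneg_right hl (abs_nonneg _)
  -- ξ integrable
  have hξint : Integrable ξ μ := by
    refine Integrable.mono' (hδint.const_mul δ⁻¹) hmeas.aestronglyMeasurable
      (Filter.Eventually.of_forall fun ω => ?_)
    rw [Real.norm_eq_abs]
    have h1 : δ * |ξ ω| ≤ Real.exp (δ * |ξ ω|) := by
      linarith [Real.add_one_le_exp (δ * |ξ ω|)]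
    rw [le_inv_mul_iff₀ hδ]
    linarith
  set E : ℝ := ∫ ω, Real.exp (δ * |ξ ω|) ∂μ with hE
  set C : ℝ := 16 / δ ^ 2 * E with hC
  have hEnn : 0 ≤ E := integral_nonneg fun ω => (Real.exp_pos _).le
  have hCnn : 0 ≤ C := by positivity
  -- pointwise bound
  have hptw : ∀ l : ℝ, |l| ≤ δ / 2 → ∀ ω,
      Real.exp (l * ξ ω) ≤ 1 + l * ξ ω + 16 / δ ^ 2 * l ^ 2 * Real.exp (δ * |ξ ω|) := by
    intro l hl ω
    have h1 := aux_exp_le_quad (l * ξ ω)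
    have h2 : Real.exp |l * ξ ω| ≤ Real.exp (δ / 2 * |ξ ω|) := by
      refine Real.exp_le_exp.2 ?_
      rw [abs_mul]
      exact mul_le_mul_of_nonneg_right hl (abs_nonneg _)
    have h3 : (ξ ω) ^ 2 ≤ 16 / δ ^ 2 * Real.exp (δ / 2 * |ξ ω|) := by
      have := aux_sq_le_exp (a := δ / 2 * |ξ ω|) (by positivity)
      have hsq : (δ / 2 * |ξ ω|) ^ 2 = δ ^ 2 / 4 * (ξ ω) ^ 2 := by
        rw [mul_pow, sq_abs]; ring
      rw [hsq] at this
      rw [div_mul_eq_mul_div, le_div_iff₀ (by positivity)]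
      nlinarith
    have h4 : Real.exp (δ / 2 * |ξ ω|) * Real.exp (δ / 2 * |ξ ω|) = Real.exp (δ * |ξ ω|) := by
      rw [← Real.exp_add]; ring_nf
    calc Real.exp (l * ξ ω) ≤ 1 + l * ξ ω + (l * ξ ω) ^ 2 * Real.exp |l * ξ ω| := h1
      _ ≤ 1 + l * ξ ω + 16 / δ ^ 2 * l ^ 2 * Real.exp (δ * |ξ ω|) := by
          have e1 : (l * ξ ω) ^ 2 * Real.exp |l * ξ ω| ≤ l ^ 2 * (ξ ω) ^ 2 * Real.exp (δ / 2 * |ξ ω|) := by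
            rw [mul_pow]
            exact mul_le_mul_of_nonneg_left h2 (by positivity)
          have e2 : l ^ 2 * (ξ ω) ^ 2 * Real.exp (δ / 2 * |ξ ω|) ≤
              l ^ 2 * (16 / δ ^ 2 * Real.exp (δ / 2 * |ξ ω|)) * Real.exp (δ / 2 * |ξ ω|) := by
            have := mul_le_mul_of_nonneg_left h3 (sq_nonneg l)
            exact mul_le_mul_of_nonneg_right (by linarith) (Real.exp_pos _).le
          have e3 : l ^ 2 * (16 / δ ^ 2 * Real.exp (δ / 2 * |ξ ω|)) * Real.exp (δ / 2 * |ξ ω|) =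
              16 / δ ^ 2 * l ^ 2 * Real.exp (δ * |ξ ω|) := by
            rw [← h4]; ring
          linarith
  -- mgf bound
  have hψle : ∀ l : ℝ, |l| ≤ δ / 2 → ∫ ω, Real.exp (l * ξ ω) ∂μ ≤ 1 + C * l ^ 2 := by
    intro l hl
    have hintl := hint l (by linarith [abs_nonneg l, hδ])
    have hrhs : Integrable (fun ω => 1 + l * ξ ω + 16 / δ ^ 2 * l ^ 2 * Real.exp (δ * |ξ ω|)) μ :=
      ((integrable_const 1).add (hξint.const_mul l)).add (hδint.const_mul _)
    calc ∫ ω, Real.exp (l * ξ ω) ∂μ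
        ≤ ∫ ω, (1 + l * ξ ω + 16 / δ ^ 2 * l ^ 2 * Real.exp (δ * |ξ ω|)) ∂μ :=
          integral_mono hintl hrhs (hptw l hl)
      _ = 1 + C * l ^ 2 := by
          have h12 : Integrable (fun ω => 1 + l * ξ ω) μ :=
            (integrable_const 1).add (hξint.const_mul l)
          have h3i : Integrable (fun ω => 16 / δ ^ 2 * l ^ 2 * Real.exp (δ * |ξ ω|)) μ :=
            hδint.const_mul _
          rw [integral_add h12 h3i, integral_add (integrable_const 1) (hξint.const_mul l),
            integral_const, integral_const_mul, integral_const_mul, hmean]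
          simp only [probReal_univ, measure_univ, ENNReal.toReal_one, smul_eq_mul, mul_one, mul_zero, hC, hE]
          ring
  -- mgf positive
  have hψpos : ∀ l : ℝ, Integrable (fun ω => Real.exp (l * ξ ω)) μ →
      0 < ∫ ω, Real.exp (l * ξ ω) ∂μ := by
    intro l hintl
    refine (integral_pos_iff_support_of_nonneg (fun ω => (Real.exp_pos _).le) hintl).2 ?_
    have hsupp : Function.support (fun ω => Real.exp (l * ξ ω)) = Set.univ := by
      ext ω; simp [Function.mem_support, (Real.exp_pos _).ne']
    rw [hsupp, measure_univ]
    norm_num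
  -- devFn lower bound through a given l'
  have hdev0 : ∀ (l' : ℝ) (h : Integrable (fun ω => Real.exp (l' * ξ ω)) μ) (α : ℝ),
      ENNReal.ofReal (l' * α - Real.log (∫ ω, Real.exp (l' * ξ ω) ∂μ)) ≤ devFn μ ξ α := by
    intro l' h α
    rw [devFn]
    exact le_iSup₂_of_le l' h le_rfl
  have hΛ : ∀ l : ℝ, 0 < l → l ≤ δ / 2 → ∀ α : ℝ,
      ENNReal.ofReal (l * |α| - C * l ^ 2) ≤ devFn μ ξ α := by
    intro l hl0 hlδ α
    have habs : |l| ≤ δ / 2 := by rw [abs_of_pos hl0]; exact hlδ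
    rcases le_or_gt 0 α with hα | hα
    · have h1 := hint l (by rw [abs_of_pos hl0]; linarith)
      have hlog : Real.log (∫ ω, Real.exp (l * ξ ω) ∂μ) ≤ C * l ^ 2 := by
        have := Real.log_le_sub_one_of_pos (hψpos l h1)
        linarith [hψle l habs]
      refine le_trans ?_ (hdev0 l h1 α)
      apply ENNReal.ofReal_le_ofReal
      rw [abs_of_nonneg hα]
      linarith
    · have habs' : |(-l)| ≤ δ / 2 := by rwa [abs_neg]
      have h1 := hint (-l) (by rw [abs_neg, abs_of_pos hl0]; linarith)
      have hlog : Real.log (∫ ω, Real.exp (-l * ξ ω) ∂μ) ≤ C * l ^ 2 := by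
        have := Real.log_le_sub_one_of_pos (hψpos (-l) h1)
        have h2 := hψle (-l) habs'
        have : C * (-l) ^ 2 = C * l ^ 2 := by ring
        linarith [hψle (-l) habs', Real.log_le_sub_one_of_pos (hψpos (-l) h1),
          (by ring : C * (-l) ^ 2 = C * l ^ 2)]
      refine le_trans ?_ (hdev0 (-l) h1 α)
      apply ENNReal.ofReal_le_ofReal
      rw [abs_of_neg hα]
      nlinarith
  -- lambda bounds
  have hlamP : ENNReal.ofReal δ ≤ lamPlus μ ξ := by
    rw [lamPlus]
    exact le_iSup₂_of_le δ (hint δ (le_of_eq (abs_of_pos hδ))) le_rfl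
  have hlamM : ENNReal.ofReal δ ≤ lamMinusAbs μ ξ := by
    rw [lamMinusAbs]
    refine le_iSup₂_of_le (-δ) (hint (-δ) ?_) (le_of_eq (by rw [neg_neg]))
    rw [abs_neg, abs_of_pos hδ]
  rw [Metric.tendsto_atTop]
  intro ε hε
  set M : ℝ := (Jrate μ ξ f).toReal + 1 with hM
  have hM0 : 0 < M := by positivity
  have hJlt : Jrate μ ξ f < ENNReal.ofReal M := by
    rw [ENNReal.lt_ofReal_iff_toReal_lt hJ]
    exact lt_add_one _
  set l : ℝ := min (δ / 2) (ε / (2 * (C + 1))) with hldef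
  have hl0 : 0 < l := lt_min (by linarith) (by positivity)
  have hlδ : l ≤ δ / 2 := min_le_left _ _
  have hCl : C * l ≤ ε / 2 := by
    have h1 : l ≤ ε / (2 * (C + 1)) := min_le_right _ _
    have h3 : C * l ≤ C * (ε / (2 * (C + 1))) := mul_le_mul_of_nonneg_left h1 hCnn
    have h2 : C * (ε / (2 * (C + 1))) ≤ ε / 2 := by
      rw [mul_comm, div_mul_eq_mul_div, div_le_div_iff₀ (by positivity) (by norm_num)]
      nlinarith
    linarith
  -- the key uniform bound
  have hbound : ∀ t : ℝ, 0 < t → |f t| ≤ M / l + 2 * (M / δ) + ε / 2 * t := by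
    intro t ht
    have h1 : (⨅ (ν : SignedMeasure ℝ)
        (_ : ∀ u ∈ Set.Icc (0:ℝ) t, f u = ν (Set.Ioc (0:ℝ) u)), J0 μ ξ ν t)
        < ENNReal.ofReal M := by
      refine lt_of_le_of_lt ?_ hJlt
      rw [Jrate]
      exact le_iSup₂_of_le t ht le_rfl
    rw [iInf_lt_iff] at h1
    obtain ⟨ν, h1⟩ := h1
    rw [iInf_lt_iff] at h1
    obtain ⟨hrep, hJ0⟩ := h1
    have hft : f t = ν (Set.Ioc 0 t) := hrep t ⟨ht.le, le_refl t⟩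
    have hdecomp := ν.singularPart_add_withDensity_rnDeriv_eq volume
    have happ : ν (Set.Ioc 0 t) = (ν.singularPart volume) (Set.Ioc 0 t)
        + ∫ x in Set.Ioc (0:ℝ) t, ν.rnDeriv volume x := by
      conv_lhs => rw [← hdecomp]
      rw [VectorMeasure.add_apply,
        withDensityᵥ_apply (SignedMeasure.integrable_rnDeriv ν volume) measurableSet_Ioc]
    rw [J0] at hJ0
    have hA : (∫⁻ x in Set.Ioc (0:ℝ) t, devFn μ ξ (ν.rnDeriv volume x)) ≤ ENNReal.ofReal M :=
      le_trans (le_trans le_self_add le_self_add) hJ0.le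
    have hB : lamPlus μ ξ *
        (ν.singularPart volume).toJordanDecomposition.posPart (Set.Ioc (0:ℝ) t)
        ≤ ENNReal.ofReal M := le_trans (le_trans le_add_self le_self_add) hJ0.le
    have hD : lamMinusAbs μ ξ *
        (ν.singularPart volume).toJordanDecomposition.negPart (Set.Ioc (0:ℝ) t)
        ≤ ENNReal.ofReal M := le_trans le_add_self hJ0.le
    -- singular part bounds
    have htoReal : ∀ (m : Measure ℝ) [IsFiniteMeasure m], ENNReal.ofReal δ * m (Set.Ioc (0:ℝ) t)
        ≤ ENNReal.ofReal M → (m (Set.Ioc (0:ℝ) t)).toReal ≤ M / δ := by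
      intro m _ hm
      have h2 := ENNReal.toReal_mono (by simp) hm
      rw [ENNReal.toReal_mul, ENNReal.toReal_ofReal hδ.le, ENNReal.toReal_ofReal hM0.le] at h2
      rw [le_div_iff₀ hδ]
      linarith
    have hposb := htoReal _ (le_trans (mul_le_mul_left hlamP _) hB)
    have hnegb := htoReal _ (le_trans (mul_le_mul_left hlamM _) hD)
    have hsing : |(ν.singularPart volume) (Set.Ioc (0:ℝ) t)| ≤ 2 * (M / δ) := by
      have hs : (ν.singularPart volume) (Set.Ioc (0:ℝ) t) =
          ((ν.singularPart volume).toJordanDecomposition.posPart (Set.Ioc (0:ℝ) t)).toReal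
          - ((ν.singularPart volume).toJordanDecomposition.negPart (Set.Ioc (0:ℝ) t)).toReal := by
        conv_lhs => rw [← (ν.singularPart volume).toSignedMeasure_toJordanDecomposition]
        rw [JordanDecomposition.toSignedMeasure, VectorMeasure.sub_apply,
          Measure.toSignedMeasure_apply_measurable measurableSet_Ioc,
          Measure.toSignedMeasure_apply_measurable measurableSet_Ioc]
        rfl
      rw [hs]
      refine abs_le.2 ⟨?_, ?_⟩
      · have := ENNReal.toReal_nonneg (a :=
          (ν.singularPart volume).toJordanDecomposition.posPart (Set.Ioc (0:ℝ) t))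
        linarith
      · have := ENNReal.toReal_nonneg (a :=
          (ν.singularPart volume).toJordanDecomposition.negPart (Set.Ioc (0:ℝ) t))
        linarith
    -- absolutely continuous part bound
    have hgint : Integrable (ν.rnDeriv volume) (volume.restrict (Set.Ioc (0:ℝ) t)) :=
      (SignedMeasure.integrable_rnDeriv ν volume).restrict
    have hpt : ∀ x : ℝ, ENNReal.ofReal (l * |ν.rnDeriv volume x|) ≤
        devFn μ ξ (ν.rnDeriv volume x) + ENNReal.ofReal (C * l ^ 2) := by
      intro x
      have h1 : ENNReal.ofReal (l * |ν.rnDeriv volume x|)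
          ≤ ENNReal.ofReal (l * |ν.rnDeriv volume x| - C * l ^ 2) + ENNReal.ofReal (C * l ^ 2) := by
        have he : l * |ν.rnDeriv volume x| =
            (l * |ν.rnDeriv volume x| - C * l ^ 2) + C * l ^ 2 := by ring
        conv_lhs => rw [he]
        exact ENNReal.ofReal_add_le
      exact le_trans h1 (add_le_add_left (hΛ l hl0 hlδ _) _)
    have hlint : (∫⁻ x in Set.Ioc (0:ℝ) t, ENNReal.ofReal (l * |ν.rnDeriv volume x|))
        ≤ ENNReal.ofReal (M + C * l ^ 2 * t) := by
      calc ∫⁻ x in Set.Ioc (0:ℝ) t, ENNReal.ofReal (l * |ν.rnDeriv volume x|)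
          ≤ ∫⁻ x in Set.Ioc (0:ℝ) t,
            (devFn μ ξ (ν.rnDeriv volume x) + ENNReal.ofReal (C * l ^ 2)) :=
            lintegral_mono hpt
        _ = (∫⁻ x in Set.Ioc (0:ℝ) t, devFn μ ξ (ν.rnDeriv volume x))
            + ENNReal.ofReal (C * l ^ 2) * volume (Set.Ioc (0:ℝ) t) := by
            rw [lintegral_add_right _ measurable_const, setLIntegral_const]
        _ ≤ ENNReal.ofReal M + ENNReal.ofReal (C * l ^ 2) * ENNReal.ofReal t := by
            rw [Real.volume_Ioc, sub_zero]
            exact add_le_add hA le_rfl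
        _ = ENNReal.ofReal (M + C * l ^ 2 * t) := by
            rw [← ENNReal.ofReal_mul (by positivity), ← ENNReal.ofReal_add hM0.le (by positivity)]
    have hgabs : ∫ x in Set.Ioc (0:ℝ) t, |ν.rnDeriv volume x| ≤ M / l + C * l * t := by
      have heq : ENNReal.ofReal (∫ x in Set.Ioc (0:ℝ) t, l * |ν.rnDeriv volume x|)
          = ∫⁻ x in Set.Ioc (0:ℝ) t, ENNReal.ofReal (l * |ν.rnDeriv volume x|) :=
        ofReal_integral_eq_lintegral_ofReal (hgint.abs.const_mul l)
          (Filter.Eventually.of_forall fun x => by positivity)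
      have h2 : ∫ x in Set.Ioc (0:ℝ) t, l * |ν.rnDeriv volume x| ≤ M + C * l ^ 2 * t := by
        rw [← ENNReal.ofReal_le_ofReal_iff
          (by nlinarith [mul_nonneg (mul_nonneg hCnn (sq_nonneg l)) ht.le]), heq]
        exact hlint
      rw [integral_const_mul] at h2
      rw [← mul_le_mul_iff_right₀ hl0]
      have he2 : l * (M / l + C * l * t) = M + C * l ^ 2 * t := by
        field_simp
      rw [he2]
      exact h2
    have hintabs : |∫ x in Set.Ioc (0:ℝ) t, ν.rnDeriv volume x|
        ≤ ∫ x in Set.Ioc (0:ℝ) t, |ν.rnDeriv volume x| := by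
      simpa [Real.norm_eq_abs] using
        norm_integral_le_integral_norm (μ := volume.restrict (Set.Ioc (0:ℝ) t))
          (f := ν.rnDeriv volume)
    have hClt : C * l * t ≤ ε / 2 * t := mul_le_mul_of_nonneg_right hCl ht.le
    rw [hft, happ]
    calc |(ν.singularPart volume) (Set.Ioc (0:ℝ) t) + ∫ x in Set.Ioc (0:ℝ) t, ν.rnDeriv volume x|
        ≤ |(ν.singularPart volume) (Set.Ioc (0:ℝ) t)|
          + |∫ x in Set.Ioc (0:ℝ) t, ν.rnDeriv volume x| := abs_add_le _ _
      _ ≤ M / l + 2 * (M / δ) + ε / 2 * t := by linarith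
  -- conclude
  refine ⟨max 1 (2 * (M / l + 2 * (M / δ)) / ε), fun t ht => ?_⟩
  have ht1 : (1:ℝ) ≤ t := le_trans (le_max_left _ _) ht
  have ht0 : 0 < t := lt_of_lt_of_le one_pos ht1
  have hK : M / l + 2 * (M / δ) ≤ ε / 2 * t := by
    have h2 : 2 * (M / l + 2 * (M / δ)) / ε ≤ t := le_trans (le_max_right _ _) ht
    rw [div_le_iff₀ hε] at h2
    linarith
  have hb := hbound t ht0
  rw [Real.dist_eq, sub_zero]
  have h1t : 0 < 1 + t := by linarith
  rw [abs_div, abs_of_pos h1t, div_lt_iff₀ h1t]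
  nlinarith
end

section
/- Let ξ(t) be a compound Poisson process whose jump variable Y satisfies E[e^{δ|Y|}] < ∞ for some δ > 0 and E[Y] = 0. Then for every N < ∞ and every U < ∞ there exists V < ∞ such that limsup_{T → ∞} (1/T) · log P( there exists t ∈ [0, 2U] with |ξ(tT)|/T > V(1 + t) ) ≤ −N. -/
open MeasureTheory ProbabilityTheory Filter Set
open scoped ENNReal

/-- The Poisson counting process `N(t) = #{k ≥ 1 : τ₁ + ⋯ + τ_k ≤ t}` built from the
interarrival times `τ₁, τ₂, …` (here `τ i` is the `(i+1)`-st interarrival time). -/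
noncomputable def countProc {Ω : Type*} (τ : ℕ → Ω → ℝ) (t : ℝ) (ω : Ω) : ℕ :=
  Nat.card {k : ℕ | 1 ≤ k ∧ ∑ i ∈ Finset.range k, τ i ω ≤ t}

/-- The compound Poisson process `ξ(t) = Σ_{i=1}^{N(t)} Y_i` with interarrival times `τ`
and jumps `Y`. -/
noncomputable def cpp {Ω : Type*} (τ Y : ℕ → Ω → ℝ) (t : ℝ) (ω : Ω) : ℝ :=
  ∑ i ∈ Finset.range (countProc τ t ω), Y i ω


lemma iIndepFun_comp_embedding {Ω : Type*} [MeasurableSpace Ω] {μ : Measure Ω}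
    {ι ι' : Type*} {f : ι → Ω → ℝ} (g : ι' ↪ ι)
    (h : iIndepFun f μ) :
    iIndepFun (fun j => f (g j)) μ := by
  classical
  rw [iIndepFun_iff_measure_inter_preimage_eq_mul]
  intro S sets hsets
  set sets' : ι → Set ℝ := fun i =>
    if h : ∃ j ∈ S, g j = i then sets h.choose else Set.univ with hsets'def
  have key : ∀ j ∈ S, sets' (g j) = sets j := by
    intro j hj
    have hex : ∃ j' ∈ S, g j' = g j := ⟨j, hj, rfl⟩
    have hspec := hex.choose_spec
    have hj' : hex.choose = j := g.injective hspec.2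
    simp only [hsets'def, dif_pos hex, hj']
  have H := h.measure_inter_preimage_eq_mul (S.map g) (sets := sets') ?_
  · have hInter : (⋂ i ∈ S.map g, f i ⁻¹' sets' i)
        = ⋂ j ∈ S, f (g j) ⁻¹' sets j := by
      ext ω
      simp only [Set.mem_iInter, Finset.mem_map]
      constructor
      · intro h' j hj
        have := h' (g j) ⟨j, hj, rfl⟩
        rwa [key j hj] at this
      · rintro h' i ⟨j, hj, rfl⟩
        rw [key j hj]; exact h' j hj
    have hProd : (∏ i ∈ S.map g, μ (f i ⁻¹' sets' i))
        = ∏ j ∈ S, μ (f (g j) ⁻¹' sets j) := by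
      rw [Finset.prod_map]
      exact Finset.prod_congr rfl fun j hj => by
        rw [key j hj]
    rw [hInter, hProd] at H
    exact H
  · intro i hi
    rw [Finset.mem_map] at hi
    obtain ⟨j, hj, rfl⟩ := hi
    rw [key j hj]; exact hsets j hj

lemma cpp_pathwise {Ω : Type*} (τ Y : ℕ → Ω → ℝ) (ω : Ω) (hτ : ∀ i, 0 ≤ τ i ω)
    {T V U : ℝ} (hT : 0 < T) (hV : 0 ≤ V) (n : ℕ)
    (h : ∃ t ∈ Set.Icc (0:ℝ) (2*U), V * (1+t) < |cpp τ Y (t*T) ω| / T) :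
    V * T < ∑ i ∈ Finset.range n, |Y i ω|
      ∨ ∑ i ∈ Finset.range (n+1), τ i ω ≤ 2*U*T := by
  obtain ⟨t, ⟨ht0, ht2⟩, hlt⟩ := h
  set m := countProc τ (t*T) ω with hm
  have hcppeq : cpp τ Y (t*T) ω = ∑ i ∈ Finset.range m, Y i ω := rfl
  have habs : |cpp τ Y (t*T) ω| ≤ ∑ i ∈ Finset.range m, |Y i ω| := by
    rw [hcppeq]; exact Finset.abs_sum_le_sum_abs _ _
  have hVT : V * T < |cpp τ Y (t*T) ω| := by
    rw [lt_div_iff₀ hT] at hlt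
    nlinarith [mul_nonneg (mul_nonneg hV ht0) hT.le]
  by_cases hmn : m ≤ n
  · left
    calc V*T < ∑ i ∈ Finset.range m, |Y i ω| := lt_of_lt_of_le hVT habs
      _ ≤ ∑ i ∈ Finset.range n, |Y i ω| :=
        Finset.sum_le_sum_of_subset_of_nonneg (Finset.range_subset_range.2 hmn)
          (fun i _ _ => abs_nonneg _)
  · right
    push_neg at hmn
    set K : Set ℕ := {k | 1 ≤ k ∧ ∑ i ∈ Finset.range k, τ i ω ≤ t*T} with hK
    have hcard : Nat.card K = m := rfl
    have hex : ∃ k ∈ K, n + 1 ≤ k := by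
      by_contra hcon
      push_neg at hcon
      have hsub : K ⊆ Set.Icc 1 n := fun k hk => ⟨hk.1, by have := hcon k hk; omega⟩
      have hle : Nat.card K ≤ n := by
        rw [Nat.card_coe_set_eq]
        calc K.ncard ≤ (Set.Icc 1 n).ncard :=
              Set.ncard_le_ncard hsub (Set.finite_Icc _ _)
          _ = n := by
              rw [← Finset.coe_Icc, Set.ncard_coe_finset, Nat.card_Icc]; omega
      omega
    obtain ⟨k, hkK, hk⟩ := hex
    calc ∑ i ∈ Finset.range (n+1), τ i ω ≤ ∑ i ∈ Finset.range k, τ i ω :=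
          Finset.sum_le_sum_of_subset_of_nonneg (Finset.range_subset_range.2 hk)
            (fun i _ _ => hτ i)
      _ ≤ t*T := hkK.2
      _ ≤ 2*U*T := mul_le_mul_of_nonneg_right ht2 hT.le

set_option maxHeartbeats 1000000 in
/-- for a compound Poisson process `ξ(t)` whose centered jump variable has a
finite exponential moment, for every `N` and `U` there is `V` with
`limsup_{T→∞} (1/T) log P(∃ t ∈ [0,2U], |ξ(tT)|/T > V(1+t)) ≤ −N`. -/
theorem cpp_sup_limsup_le {Ω : Type*} [MeasurableSpace Ω] (μ : Measure Ω)
    [IsProbabilityMeasure μ] (τ Y : ℕ → Ω → ℝ) (r : ℝ) (hr : 0 < r)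
    (hτmeas : ∀ i, Measurable (τ i)) (hYmeas : ∀ i, Measurable (Y i))
    (hindep : iIndepFun (Sum.elim τ Y) μ)
    (hτdist : ∀ i, Measure.map (τ i) μ = expMeasure r)
    (hYdist : ∀ i, Measure.map (Y i) μ = Measure.map (Y 0) μ)
    (hC0 : ∃ δ > 0, Integrable (fun ω => Real.exp (δ * |Y 0 ω|)) μ)
    (hmean : ∫ ω, Y 0 ω ∂μ = 0) :
    ∀ N : ℝ, ∀ U : ℝ, ∃ V : ℝ,
      Filter.limsup
        (fun T : ℝ => ((T⁻¹ : ℝ) : EReal) *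
          ENNReal.log (μ {ω | ∃ t ∈ Set.Icc (0 : ℝ) (2 * U),
            V * (1 + t) < |cpp τ Y (t * T) ω| / T}))
        Filter.atTop ≤ ((-N : ℝ) : EReal) := by
  intro N U
  obtain ⟨δ, hδ, hint0⟩ := hC0
  -- independence
  have hτindep : iIndepFun τ μ :=
    iIndepFun_comp_embedding ⟨Sum.inl, Sum.inl_injective⟩ hindep
  have hYindep : iIndepFun Y μ :=
    iIndepFun_comp_embedding ⟨Sum.inr, Sum.inr_injective⟩ hindep
  set Z : ℕ → Ω → ℝ := fun i ω => |Y i ω| with hZdef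
  have hZmeas : ∀ i, Measurable (Z i) := fun i => (hYmeas i).abs
  have hZindep : iIndepFun Z μ :=
    hYindep.comp (fun _ => (|·|)) (fun _ => measurable_abs)
  -- Y side constants
  set M : ℝ := ∫ ω, Real.exp (δ * |Y 0 ω|) ∂μ with hMdef
  have hgmeas : Measurable fun x : ℝ => Real.exp (δ * |x|) :=
    (measurable_abs.const_mul δ).exp
  have hYint : ∀ i, Integrable (fun ω => Real.exp (δ * |Y i ω|)) μ := by
    intro i
    have h0 : Integrable (fun x => Real.exp (δ * |x|)) (Measure.map (Y 0) μ) :=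
      (integrable_map_measure hgmeas.aestronglyMeasurable (hYmeas 0).aemeasurable).2 hint0
    rw [← hYdist i] at h0
    exact (integrable_map_measure hgmeas.aestronglyMeasurable (hYmeas i).aemeasurable).1 h0
  have hYmgf : ∀ i, ∫ ω, Real.exp (δ * |Y i ω|) ∂μ = M := by
    intro i
    calc ∫ ω, Real.exp (δ * |Y i ω|) ∂μ
        = ∫ x, Real.exp (δ * |x|) ∂(Measure.map (Y i) μ) :=
          (integral_map (hYmeas i).aemeasurable hgmeas.aestronglyMeasurable).symm
      _ = ∫ x, Real.exp (δ * |x|) ∂(Measure.map (Y 0) μ) := by rw [hYdist i]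
      _ = M := integral_map (hYmeas 0).aemeasurable hgmeas.aestronglyMeasurable
  have hM1 : 1 ≤ M := by
    have h1 : ∫ _ω, (1:ℝ) ∂μ ≤ M :=
      integral_mono (integrable_const 1) hint0
        (fun ω => Real.one_le_exp (by positivity))
    simpa using h1
  have hMpos : 0 < M := lt_of_lt_of_le one_pos hM1
  -- τ side
  have hτ0 : ∀ i, μ {ω | τ i ω < 0} = 0 := by
    intro i
    have he : {ω | τ i ω < 0} = τ i ⁻¹' (Set.Iio 0) := rfl
    rw [he, ← Measure.map_apply (hτmeas i) measurableSet_Iio, hτdist i]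
    show expMeasure r (Set.Iio 0) = 0
    rw [expMeasure, gammaMeasure, withDensity_apply _ measurableSet_Iio]
    exact lintegral_exponentialPDF_of_nonpos le_rfl
  have hτae : ∀ i, ∀ᵐ ω ∂μ, 0 ≤ τ i ω := by
    intro i
    rw [ae_iff]
    simpa [not_le] using hτ0 i
  have hemeas : Measurable fun x : ℝ => Real.exp (-1 * x) :=
    (measurable_id.const_mul (-1)).exp
  have hτint : ∀ i, Integrable (fun ω => Real.exp (-1 * τ i ω)) μ := by
    intro i
    refine Integrable.mono' (integrable_const 1)
      ((hτmeas i).const_mul (-1)).exp.aestronglyMeasurable ?_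
    filter_upwards [hτae i] with ω hω
    rw [Real.norm_eq_abs, abs_of_pos (Real.exp_pos _)]
    rw [Real.exp_le_one_iff]
    nlinarith
  set c : ℝ := ∫ ω, Real.exp (-1 * τ 0 ω) ∂μ with hcdef
  have hτmgf : ∀ i, ∫ ω, Real.exp (-1 * τ i ω) ∂μ = c := by
    intro i
    calc ∫ ω, Real.exp (-1 * τ i ω) ∂μ
        = ∫ x, Real.exp (-1 * x) ∂(Measure.map (τ i) μ) :=
          (integral_map (hτmeas i).aemeasurable hemeas.aestronglyMeasurable).symm
      _ = ∫ x, Real.exp (-1 * x) ∂(Measure.map (τ 0) μ) := by rw [hτdist i, hτdist 0]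
      _ = c := integral_map (hτmeas 0).aemeasurable hemeas.aestronglyMeasurable
  have hcpos : 0 < c := by
    have : 0 < mgf (τ 0) μ (-1) := mgf_pos (hτint 0)
    rw [hcdef]
    simpa [mgf, neg_one_mul] using this
  -- c < 1
  have hprob : IsProbabilityMeasure (expMeasure r) := isProbabilityMeasure_expMeasure hr
  have hA1meas : MeasurableSet {ω | 1 ≤ τ 0 ω} := measurableSet_le measurable_const (hτmeas 0)
  have hA1 : μ {ω | 1 ≤ τ 0 ω} = expMeasure r (Set.Ici 1) := by
    have he : {ω | 1 ≤ τ 0 ω} = τ 0 ⁻¹' (Set.Ici 1) := rfl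
    rw [he, ← Measure.map_apply (hτmeas 0) measurableSet_Ici, hτdist 0]
  have hIic : expMeasure r (Set.Iic 1) < 1 := by
    have ht : (expMeasure r (Set.Iic 1)).toReal = 1 - Real.exp (-(r*1)) := by
      have h1 := cdf_expMeasure_eq hr 1
      rw [cdf_eq_real, Measure.real] at h1
      rw [h1]; norm_num
    have hlt : (expMeasure r (Set.Iic 1)).toReal < 1 := by
      rw [ht]; have := Real.exp_pos (-(r*1)); linarith
    have hne : expMeasure r (Set.Iic 1) ≠ ⊤ := measure_ne_top _ _
    rw [← ENNReal.toReal_one] at hlt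
    exact (ENNReal.toReal_lt_toReal hne ENNReal.one_ne_top).1 hlt
  have hIci : 0 < expMeasure r (Set.Ici 1) := by
    by_contra hcon
    push_neg at hcon
    have h0 : expMeasure r (Set.Ici 1) = 0 := le_antisymm hcon zero_le
    have huniv : expMeasure r Set.univ ≤ expMeasure r (Set.Iic 1) + expMeasure r (Set.Ici 1) := by
      calc expMeasure r Set.univ ≤ expMeasure r (Set.Iic 1 ∪ Set.Ici 1) :=
            measure_mono (fun x _ => (le_total x 1).imp (fun h => h) (fun h => h))
        _ ≤ _ := measure_union_le _ _
    rw [h0, add_zero, measure_univ] at huniv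
    exact absurd huniv hIic.not_ge
  have hA1pos : 0 < (μ {ω | 1 ≤ τ 0 ω}).toReal := by
    rw [hA1]
    exact ENNReal.toReal_pos hIci.ne' (measure_ne_top _ _)
  have hint1 : Integrable (fun ω => 1 - Real.exp (-1 * τ 0 ω)) μ :=
    (integrable_const 1).sub (hτint 0)
  have hI2 : ∫ ω, (1 - Real.exp (-1 * τ 0 ω)) ∂μ = 1 - c := by
    rw [integral_sub (integrable_const 1) (hτint 0)]
    simp [hcdef]
  have h3 : (1 - Real.exp (-1)) * (μ {ω | 1 ≤ τ 0 ω}).toReal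
      ≤ ∫ ω in {ω | 1 ≤ τ 0 ω}, (1 - Real.exp (-1 * τ 0 ω)) ∂μ := by
    refine setIntegral_ge_of_const_le_real hA1meas (measure_ne_top _ _) ?_ hint1.integrableOn
    intro ω hω
    have : Real.exp (-1 * τ 0 ω) ≤ Real.exp (-1) := by
      apply Real.exp_le_exp.2
      have : (1:ℝ) ≤ τ 0 ω := hω
      linarith
    linarith
  have h4 : ∫ ω in {ω | 1 ≤ τ 0 ω}, (1 - Real.exp (-1 * τ 0 ω)) ∂μ
      ≤ ∫ ω, (1 - Real.exp (-1 * τ 0 ω)) ∂μ := by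
    refine setIntegral_le_integral hint1 ?_
    filter_upwards [hτae 0] with ω hω
    have : Real.exp (-1 * τ 0 ω) ≤ 1 := by
      rw [Real.exp_le_one_iff]; nlinarith
    simpa using this
  have hclt : c < 1 := by
    have hfac : 0 < 1 - Real.exp (-1) := by
      have := Real.exp_lt_one_iff.2 (by norm_num : (-1:ℝ) < 0)
      linarith
    nlinarith [mul_pos hfac hA1pos, hI2 ▸ le_trans h3 h4]
  -- constants
  set lM : ℝ := Real.log M with hlMdef
  have hlM : 0 ≤ lM := Real.log_nonneg hM1
  set lc : ℝ := Real.log c with hlcdef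
  have hlc : lc < 0 := Real.log_neg hcpos hclt
  have hL : 0 < -lc := by linarith
  set a : ℝ := max 0 ((2*U + N + 1)/(-lc)) with hadef
  have ha0 : 0 ≤ a := le_max_left _ _
  have haL : 2*U + N + 1 ≤ a * (-lc) := by
    have h := le_max_right 0 ((2*U + N + 1)/(-lc))
    rw [div_le_iff₀ hL] at h
    exact h
  set V : ℝ := max 0 ((a*lM + N + 1)/δ) with hVdef
  have hV0 : 0 ≤ V := le_max_left _ _
  have hVδ : a*lM + N + 1 ≤ δ*V := by
    have h := le_max_right 0 ((a*lM + N + 1)/δ)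
    calc a*lM + N + 1 = ((a*lM + N + 1)/δ) * δ := by rw [div_mul_cancel₀ _ hδ.ne']
      _ ≤ V * δ := mul_le_mul_of_nonneg_right h hδ.le
      _ = δ*V := mul_comm _ _
  refine ⟨V, ?_⟩
  refine Filter.limsup_le_of_le ?_ ?_
  · isBoundedDefault
  · filter_upwards [eventually_ge_atTop (max 1 (Real.log (M+1)))] with T hT
    have hT1 : (1:ℝ) ≤ T := le_trans (le_max_left _ _) hT
    have hTpos : (0:ℝ) < T := lt_of_lt_of_le one_pos hT1
    have hT0 : (0:ℝ) ≤ T := hTpos.le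
    set n : ℕ := ⌈a*T⌉₊ with hndef
    have haT : (0:ℝ) ≤ a*T := mul_nonneg ha0 hT0
    have hn1 : a*T ≤ (n:ℝ) := Nat.le_ceil _
    have hn2 : (n:ℝ) ≤ a*T + 1 := le_of_lt (Nat.ceil_lt_add_one haT)
    set A : Set Ω := {ω | V*T ≤ (∑ i ∈ Finset.range n, Z i) ω} with hAdef
    set B : Set Ω := {ω | (∑ i ∈ Finset.range (n+1), τ i) ω ≤ 2*U*T} with hBdef
    set Bad : Set Ω := {ω | ¬ ∀ i, 0 ≤ τ i ω} with hBaddef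
    set E : Set Ω := {ω | ∃ t ∈ Set.Icc (0:ℝ) (2 * U),
        V * (1 + t) < |cpp τ Y (t * T) ω| / T} with hEdef
    have hsub : E ⊆ A ∪ B ∪ Bad := by
      intro ω hω
      by_cases hg : ∀ i, 0 ≤ τ i ω
      · rcases cpp_pathwise τ Y ω hg hTpos hV0 n hω with h | h
        · refine Or.inl (Or.inl ?_)
          show V*T ≤ (∑ i ∈ Finset.range n, Z i) ω
          rw [Finset.sum_apply]
          exact le_of_lt h
        · refine Or.inl (Or.inr ?_)
          show (∑ i ∈ Finset.range (n+1), τ i) ω ≤ 2*U*T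
          rw [Finset.sum_apply]
          exact h
      · exact Or.inr hg
    have hbad : μ Bad = 0 := by
      refine measure_mono_null ?_ (measure_iUnion_null (s := fun i => {ω | τ i ω < 0}) hτ0)
      intro ω hω
      have : ∃ i, τ i ω < 0 := by
        by_contra hcon
        push_neg at hcon
        exact hω hcon
      obtain ⟨i, hi⟩ := this
      exact Set.mem_iUnion.2 ⟨i, hi⟩
    -- Chernoff for A
    have hintA : Integrable (fun ω => Real.exp (δ * (∑ i ∈ Finset.range n, Z i) ω)) μ :=
      hZindep.integrable_exp_mul_sum hZmeas (fun i _ => hYint i)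
    have hchA : (μ A).toReal
        ≤ Real.exp (-δ * (V*T)) * mgf (∑ i ∈ Finset.range n, Z i) μ δ :=
      measure_ge_le_exp_mul_mgf (V*T) hδ.le hintA
    have hmgfA : mgf (∑ i ∈ Finset.range n, Z i) μ δ = M ^ n := by
      rw [hZindep.mgf_sum hZmeas (Finset.range n)]
      trans (∏ _i ∈ Finset.range n, M)
      · exact Finset.prod_congr rfl (fun i _ => hYmgf i)
      · rw [Finset.prod_const, Finset.card_range]
    have hApow : (μ A).toReal ≤ Real.exp (lM + (-(N+1)*T)) := by
      rw [hmgfA] at hchA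
      have hMn : M ^ n = Real.exp ((n:ℝ) * lM) := by
        rw [hlMdef, ← Real.exp_log hMpos, ← Real.exp_nat_mul, Real.log_exp]
      rw [hMn, ← Real.exp_add] at hchA
      refine le_trans hchA (Real.exp_le_exp.2 ?_)
      have h1 : (n:ℝ) * lM ≤ (a*T + 1) * lM := mul_le_mul_of_nonneg_right hn2 hlM
      have h2 : (a*lM - δ*V) * T ≤ (-(N+1)) * T :=
        mul_le_mul_of_nonneg_right (by linarith) hT0
      nlinarith
    -- Chernoff for B
    have hintB : Integrable (fun ω => Real.exp ((-1) * (∑ i ∈ Finset.range (n+1), τ i) ω)) μ :=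
      hτindep.integrable_exp_mul_sum hτmeas (fun i _ => hτint i)
    have hchB : (μ B).toReal
        ≤ Real.exp (-(-1) * (2*U*T)) * mgf (∑ i ∈ Finset.range (n+1), τ i) μ (-1) :=
      measure_le_le_exp_mul_mgf (2*U*T) (by norm_num) hintB
    have hmgfB : mgf (∑ i ∈ Finset.range (n+1), τ i) μ (-1) = c ^ (n+1) := by
      rw [hτindep.mgf_sum hτmeas (Finset.range (n+1))]
      trans (∏ _i ∈ Finset.range (n+1), c)
      · exact Finset.prod_congr rfl (fun i _ => hτmgf i)
      · rw [Finset.prod_const, Finset.card_range]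
    have hBpow : (μ B).toReal ≤ Real.exp (-(N+1)*T) := by
      rw [hmgfB] at hchB
      have hcn : c ^ (n+1) = Real.exp (((n:ℝ)+1) * lc) := by
        rw [hlcdef, ← Real.exp_log hcpos, ← Real.exp_nat_mul, Real.log_exp]
        norm_num
      rw [hcn, ← Real.exp_add] at hchB
      refine le_trans hchB (Real.exp_le_exp.2 ?_)
      have h1 : ((n:ℝ)+1) * lc ≤ (a*T) * lc := by
        apply mul_le_mul_of_nonpos_right _ hlc.le
        linarith
      have h2 : (2*U + a*lc) * T ≤ (-(N+1)) * T := by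
        apply mul_le_mul_of_nonneg_right _ hT0
        linarith
      nlinarith
    -- combine
    have hEle : μ E ≤ μ A + μ B := by
      calc μ E ≤ μ (A ∪ B ∪ Bad) := measure_mono hsub
        _ ≤ μ (A ∪ B) + μ Bad := measure_union_le _ _
        _ = μ (A ∪ B) := by rw [hbad, add_zero]
        _ ≤ μ A + μ B := measure_union_le _ _
    have hq : (μ E).toReal ≤ (M+1) * Real.exp (-(N+1)*T) := by
      have hp : (μ E).toReal ≤ (μ A).toReal + (μ B).toReal := by
        rw [← ENNReal.toReal_add (measure_ne_top _ _) (measure_ne_top _ _)]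
        exact ENNReal.toReal_mono
          (ENNReal.add_ne_top.2 ⟨measure_ne_top _ _, measure_ne_top _ _⟩) hEle
      have he : Real.exp (lM + (-(N+1)*T)) = M * Real.exp (-(N+1)*T) := by
        rw [Real.exp_add, hlMdef, Real.exp_log hMpos]
      nlinarith [hApow, hBpow]
    -- EReal conclusion
    by_cases hE0 : μ E = 0
    · rw [hE0, ENNReal.log_zero, EReal.coe_mul_bot_of_pos]
      · exact bot_le
      · exact_mod_cast inv_pos.2 hTpos
    · have hppos : 0 < (μ E).toReal := ENNReal.toReal_pos hE0 (measure_ne_top _ _)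
      have hEeq : μ E = ENNReal.ofReal ((μ E).toReal) :=
        (ENNReal.ofReal_toReal (measure_ne_top _ _)).symm
      rw [hEeq, ENNReal.log_ofReal_of_pos hppos, ← EReal.coe_mul, EReal.coe_le_coe_iff]
      have hlogp : Real.log ((μ E).toReal) ≤ Real.log ((M+1) * Real.exp (-(N+1)*T)) :=
        Real.log_le_log hppos hq
      have hlogq : Real.log ((M+1) * Real.exp (-(N+1)*T))
          = Real.log (M+1) + (-(N+1)*T) := by
        rw [Real.log_mul (by positivity) (Real.exp_ne_zero _), Real.log_exp]
      have hlogM1 : Real.log (M+1) ≤ T := le_trans (le_max_right 1 _) hT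
      have hinv : T⁻¹ * T = 1 := inv_mul_cancel₀ hTpos.ne'
      have hinv0 : 0 ≤ T⁻¹ := inv_nonneg.2 hT0
      have hstep : T⁻¹ * Real.log ((μ E).toReal)
          ≤ T⁻¹ * (Real.log (M+1) + (-(N+1)*T)) := by
        apply mul_le_mul_of_nonneg_left _ hinv0
        rw [← hlogq]; exact hlogp
      have hfin : T⁻¹ * (Real.log (M+1) + (-(N+1)*T)) ≤ -N := by
        have h1 : T⁻¹ * Real.log (M+1) ≤ T⁻¹ * T :=
          mul_le_mul_of_nonneg_left hlogM1 hinv0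
        rw [hinv] at h1
        have h2 : T⁻¹ * ((-(N+1))*T) = -(N+1) := by
          field_simp
        nlinarith
      linarith
end
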